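/- arXiv:1504.07035 — 4 statements merged into one kernel-verified Lean document; each statement's English description precedes it below -/
import Mathlib

section
/- Let μ be a Radon measure on ℝ^d, let D be the standard dyadic lattice of ℝ^d, and let {a_Q}_{Q∈D} be non-negative numbers such that for every R ∈ D one has ∑_{Q∈D : Q⊆R} a_Q ≤ c₃ μ(R). Then every family of non-negative numbers {γ_Q}_{Q∈D} satisfies ∑_{Q∈D} γ_Q a_Q ≤ c₃ ∫ sup_{Q∈D : Q∋x} γ_Q dμ(x). -/
open MeasureTheory Set ENNReal

noncomputable section

/-- The support of a measure on `ℝ^d`: points all of whose balls have positive measure. -/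
def msupport {d : ℕ} (μ : Measure (EuclideanSpace ℝ (Fin d))) : Set (EuclideanSpace ℝ (Fin d)) :=
  {x | ∀ r : ℝ, 0 < r → 0 < μ (Metric.ball x r)}

/-- `μ` is `n`-dimensional Ahlfors–David regular with constant `C`. -/
def IsADRegular {d : ℕ} (n : ℕ) (μ : Measure (EuclideanSpace ℝ (Fin d))) (C : ℝ) : Prop :=
  1 ≤ C ∧ ∀ x ∈ msupport μ, ∀ r : ℝ, 0 < r → ENNReal.ofReal r ≤ EMetric.diam (msupport μ) →
    ENNReal.ofReal (C⁻¹ * r ^ n) ≤ μ (Metric.closedBall x r) ∧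
      μ (Metric.closedBall x r) ≤ ENNReal.ofReal (C * r ^ n)

/-- `μ` is uniformly `n`-rectifiable, with AD-regularity constant `C` and parameters `θ`, `M`. -/
def IsUnifRectifiable {d : ℕ} (n : ℕ) (μ : Measure (EuclideanSpace ℝ (Fin d)))
    (C θ M : ℝ) : Prop :=
  IsADRegular n μ C ∧ 0 < θ ∧ 0 < M ∧
    ∀ x ∈ msupport μ, ∀ r : ℝ, 0 < r → ENNReal.ofReal r ≤ EMetric.diam (msupport μ) →
      ∃ g : EuclideanSpace ℝ (Fin n) → EuclideanSpace ℝ (Fin d),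
        LipschitzWith (Real.toNNReal M) g ∧
          ENNReal.ofReal (θ * r ^ n) ≤ μ (Metric.closedBall x r ∩ g '' Metric.closedBall 0 r)

/-- `K` is an odd `n`-dimensional Calderón–Zygmund kernel with constant `C`. -/
def IsCZKernel {d : ℕ} (n : ℕ) (K : EuclideanSpace ℝ (Fin d) → ℝ) (C : ℝ) : Prop :=
  0 < C ∧ ContDiffOn ℝ 2 K {(0 : EuclideanSpace ℝ (Fin d))}ᶜ ∧
    (∀ x : EuclideanSpace ℝ (Fin d), x ≠ 0 → K (-x) = -K x) ∧
    (∀ x : EuclideanSpace ℝ (Fin d), x ≠ 0 → |K x| ≤ C / ‖x‖ ^ n) ∧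
    (∀ x : EuclideanSpace ℝ (Fin d), x ≠ 0 → ‖fderiv ℝ K x‖ ≤ C / ‖x‖ ^ (n + 1)) ∧
    (∀ x : EuclideanSpace ℝ (Fin d), x ≠ 0 → ‖fderiv ℝ (fderiv ℝ K) x‖ ≤ C / ‖x‖ ^ (n + 2))

/-- The truncated singular integral `T_ε^μ f (x)`. -/
def Tmu {d : ℕ} (K : EuclideanSpace ℝ (Fin d) → ℝ) (μ : Measure (EuclideanSpace ℝ (Fin d)))
    (f : EuclideanSpace ℝ (Fin d) → ℝ) (ε : ℝ) (x : EuclideanSpace ℝ (Fin d)) : ℝ :=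
  ∫ y in {y | ε < dist x y}, K (x - y) * f y ∂μ

/-- The truncated singular integral `T_ε ν (x)` of a finite signed measure `ν`. -/
def Tnu {d : ℕ} (K : EuclideanSpace ℝ (Fin d) → ℝ)
    (ν : SignedMeasure (EuclideanSpace ℝ (Fin d))) (ε : ℝ) (x : EuclideanSpace ℝ (Fin d)) : ℝ :=
  (∫ y in {y | ε < dist x y}, K (x - y) ∂ν.toJordanDecomposition.posPart)
    - ∫ y in {y | ε < dist x y}, K (x - y) ∂ν.toJordanDecomposition.negPart

/-- The (untruncated) integral `∫ K(x-y) dν(y)` against a finite signed measure. -/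
def Tfull {d : ℕ} (K : EuclideanSpace ℝ (Fin d) → ℝ)
    (ν : SignedMeasure (EuclideanSpace ℝ (Fin d))) (x : EuclideanSpace ℝ (Fin d)) : ℝ :=
  (∫ y, K (x - y) ∂ν.toJordanDecomposition.posPart)
    - ∫ y, K (x - y) ∂ν.toJordanDecomposition.negPart

/-- The smoothly truncated singular integral `T_{φ_ε} ν (x)`. -/
def Tphi {d : ℕ} (K : EuclideanSpace ℝ (Fin d) → ℝ) (φ : ℝ → ℝ)
    (ν : SignedMeasure (EuclideanSpace ℝ (Fin d))) (ε : ℝ) (x : EuclideanSpace ℝ (Fin d)) : ℝ :=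
  (∫ y, φ (‖x - y‖ ^ 2 / ε ^ 2) * K (x - y) ∂ν.toJordanDecomposition.posPart)
    - ∫ y, φ (‖x - y‖ ^ 2 / ε ^ 2) * K (x - y) ∂ν.toJordanDecomposition.negPart

/-- The ρ-variation of the family `ε ↦ g ε` over non-increasing positive sequences. -/
def variation (ρ : ℝ) {E : Type*} [NormedAddCommGroup E] (g : ℝ → E) : ℝ≥0∞ :=
  ⨆ (ε : ℤ → ℝ) (_ : Antitone ε) (_ : ∀ m, 0 < ε m),
    (∑' m : ℤ, ENNReal.ofReal ‖g (ε m) - g (ε (m + 1))‖ ^ ρ) ^ (1 / ρ)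

/-- The dyadic interval `I_k = [2^{-k-1}, 2^{-k})`. -/
def Ik (k : ℤ) : Set ℝ := Set.Ico ((2 : ℝ) ^ (-k - 1)) ((2 : ℝ) ^ (-k))

/-- The short ρ-variation of the family `ε ↦ g ε`. -/
def shortVariation (ρ : ℝ) (g : ℝ → ℝ) : ℝ≥0∞ :=
  ⨆ (ε : ℤ → ℝ) (_ : Antitone ε) (_ : ∀ m, 0 < ε m),
    (∑' k : ℤ, ∑' m : ℤ,
      Set.indicator {m : ℤ | ε m ∈ Ik k ∧ ε (m + 1) ∈ Ik k}
        (fun m => ENNReal.ofReal |g (ε m) - g (ε (m + 1))| ^ ρ) m) ^ (1 / ρ)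

/-- The long ρ-variation of the family `ε ↦ g ε`. -/
def longVariation (ρ : ℝ) (g : ℝ → ℝ) : ℝ≥0∞ :=
  ⨆ (ε : ℤ → ℝ) (_ : Antitone ε) (_ : ∀ m, 0 < ε m),
    (∑' m : ℤ,
      Set.indicator {m : ℤ | ∃ j k : ℤ, j < k ∧ ε m ∈ Ik j ∧ ε (m + 1) ∈ Ik k}
        (fun m => ENNReal.ofReal |g (ε m) - g (ε (m + 1))| ^ ρ) m) ^ (1 / ρ)

/-- `φ` is an admissible smooth cutoff: non-decreasing, `C²`, with
`χ_{[4,∞)} ≤ φ ≤ χ_{[1/4,∞)}`. -/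
def IsCutoff (φ : ℝ → ℝ) : Prop :=
  Monotone φ ∧ ContDiff ℝ 2 φ ∧ (∀ t, 0 ≤ φ t) ∧ (∀ t, φ t ≤ 1) ∧
    (∀ t, 4 ≤ t → 1 ≤ φ t) ∧ ∀ t, t < 1 / 4 → φ t ≤ 0

/-- The truncated `n`-dimensional Riesz transform `R^μ_ε f (x)`. -/
def rieszT {d : ℕ} (n : ℕ) (μ : Measure (EuclideanSpace ℝ (Fin d)))
    (f : EuclideanSpace ℝ (Fin d) → ℝ) (ε : ℝ) (x : EuclideanSpace ℝ (Fin d)) :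
    EuclideanSpace ℝ (Fin d) :=
  ∫ y in {y | ε < dist x y}, (f y / ‖x - y‖ ^ (n + 1)) • (x - y) ∂μ

/-- The closed axis-parallel cube with center `z` and side length `ℓ`. -/
def cube {d : ℕ} (z : EuclideanSpace ℝ (Fin d)) (ℓ : ℝ) : Set (EuclideanSpace ℝ (Fin d)) :=
  {y | ∀ i, |y i - z i| ≤ ℓ / 2}

/-- The standard half-open dyadic cube `2^{-j}(k + [0,1)^d)` indexed by `Q = (j, k)`. -/
def dyadicCube (d : ℕ) (Q : ℤ × (Fin d → ℤ)) : Set (EuclideanSpace ℝ (Fin d)) :=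
  {x | ∀ i, (2 : ℝ) ^ (-Q.1) * Q.2 i ≤ x i ∧ x i < (2 : ℝ) ^ (-Q.1) * (Q.2 i + 1)}

/-- The μ-mean of `f` over `S` (with value `0` if `μ S` is zero or infinite). -/
def mQ {d : ℕ} (μ : Measure (EuclideanSpace ℝ (Fin d))) (S : Set (EuclideanSpace ℝ (Fin d)))
    (f : EuclideanSpace ℝ (Fin d) → ℝ) : ℝ :=
  (∫ x in S, f x ∂μ) / (μ S).toReal

/-- The centered Hardy–Littlewood maximal function of `g` w.r.t. `μ`. -/
def maximalFn {d : ℕ} (μ : Measure (EuclideanSpace ℝ (Fin d)))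
    (g : EuclideanSpace ℝ (Fin d) → ℝ) (y : EuclideanSpace ℝ (Fin d)) : ℝ≥0∞ :=
  ⨆ (R : ℝ) (_ : 0 < R),
    (∫⁻ w in Metric.closedBall y R, (‖g w‖₊ : ℝ≥0∞) ∂μ) / μ (Metric.closedBall y R)

/-- The weight `w_j = χ_{Q_j} (∑_k χ_{Q_k})⁻¹` associated to a family of cubes. -/
def wfun {d : ℕ} (J : Set ℕ) (Q : ℕ → Set (EuclideanSpace ℝ (Fin d))) (j : ℕ)
    (x : EuclideanSpace ℝ (Fin d)) : ℝ :=
  (Q j).indicator (fun _ => (∑' k : J, (Q (k : ℕ)).indicator (fun _ => (1 : ℝ)) x)⁻¹) x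

namespace S10
variable {d : ℕ}

lemma measurable_coord (i : Fin d) : Measurable fun x : EuclideanSpace ℝ (Fin d) => x i :=
  (EuclideanSpace.proj (𝕜 := ℝ) i).continuous.measurable

lemma measurableSet_dyadicCube (Q : ℤ × (Fin d → ℤ)) : MeasurableSet (dyadicCube d Q) := by
  have : dyadicCube d Q = ⋂ i, {x : EuclideanSpace ℝ (Fin d) |
      (2:ℝ)^(-Q.1) * Q.2 i ≤ x i ∧ x i < (2:ℝ)^(-Q.1) * (Q.2 i + 1)} := by
    ext x; simp [dyadicCube, Set.mem_iInter]
  rw [this]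
  exact MeasurableSet.iInter fun i =>
    ((measurableSet_le measurable_const (measurable_coord i)).inter
      (measurableSet_lt (measurable_coord i) measurable_const))

lemma corner_mem (Q : ℤ × (Fin d → ℤ)) :
    (WithLp.toLp 2 (fun i => (2:ℝ)^(-Q.1) * Q.2 i) : EuclideanSpace ℝ (Fin d)) ∈ dyadicCube d Q := by
  intro i
  have h2 : (0:ℝ) < 2^(-Q.1) := zpow_pos (by norm_num) _
  exact ⟨le_refl _, by have := mul_lt_mul_of_pos_left (lt_add_one ((Q.2 i : ℝ))) h2; simpa using this⟩

lemma cube_nonempty (Q : ℤ × (Fin d → ℤ)) : (dyadicCube d Q).Nonempty := ⟨_, corner_mem Q⟩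

lemma interval_nest {j j' k k' : ℤ} (hj : j ≤ j') {x y : ℝ}
    (hx1 : (2:ℝ)^(-j) * k ≤ x) (hx2 : x < (2:ℝ)^(-j) * (k+1))
    (hx1' : (2:ℝ)^(-j') * k' ≤ x) (hx2' : x < (2:ℝ)^(-j') * (k'+1))
    (hy1 : (2:ℝ)^(-j') * k' ≤ y) (hy2 : y < (2:ℝ)^(-j') * (k'+1)) :
    (2:ℝ)^(-j) * k ≤ y ∧ y < (2:ℝ)^(-j) * (k+1) := by
  set c : ℝ := (2:ℝ)^(-j') with hc_def
  have hc : (0:ℝ) < c := zpow_pos (by norm_num) _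
  obtain ⟨m, hm⟩ : ∃ m : ℕ, j' - j = (m:ℤ) := ⟨(j'-j).toNat, (Int.toNat_of_nonneg (by omega)).symm⟩
  have h2 : (2:ℝ)^(-j) = c * ((2^m : ℤ) : ℝ) := by
    push_cast
    rw [hc_def, ← zpow_natCast (2:ℝ) m, ← zpow_add₀ (by norm_num : (2:ℝ) ≠ 0)]
    congr 1; omega
  have key : ∀ {p q : ℤ}, c * p < c * q → p + 1 ≤ q := by
    intro p q h
    have := (mul_lt_mul_iff_right₀ hc).mp h
    exact_mod_cast Int.add_one_le_of_lt (by exact_mod_cast this)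
  -- K = 2^m * k, K2 = 2^m * (k+1)
  have e1 : (2:ℝ)^(-j) * k = c * ((2^m * k : ℤ) : ℝ) := by rw [h2]; push_cast; ring
  have e2 : (2:ℝ)^(-j) * (k+1) = c * ((2^m * (k+1) : ℤ) : ℝ) := by rw [h2]; push_cast; ring
  have hK1 : (2^m * k : ℤ) + 1 ≤ k' + 1 := by
    apply key
    calc c * ((2^m * k : ℤ) : ℝ) = (2:ℝ)^(-j) * k := e1.symm
    _ ≤ x := hx1
    _ < c * ((k':ℝ)+1) := hx2'
    _ = c * ((k'+1 : ℤ) : ℝ) := by push_cast; ring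
  have hK2 : k' + 1 ≤ (2^m * (k+1) : ℤ) := by
    apply key
    calc c * ((k' : ℤ) : ℝ) ≤ x := hx1'
    _ < (2:ℝ)^(-j) * ((k:ℝ)+1) := hx2
    _ = c * ((2^m * (k+1) : ℤ) : ℝ) := e2
  constructor
  · rw [e1]
    calc c * ((2^m*k : ℤ) : ℝ) ≤ c * k' := by
          apply mul_le_mul_of_nonneg_left _ hc.le
          exact_mod_cast (by omega : (2^m*k : ℤ) ≤ k')
    _ ≤ y := hy1
  · rw [e2]
    calc y < c * (k'+1) := hy2
    _ ≤ c * ((2^m*(k+1) : ℤ) : ℝ) := by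
          apply mul_le_mul_of_nonneg_left _ hc.le
          exact_mod_cast (by exact_mod_cast hK2 : ((k'+1 : ℤ):ℝ) ≤ ((2^m*(k+1) : ℤ) : ℝ))
    _ = c * ((2^m*(k+1) : ℤ) : ℝ) := rfl

lemma cube_subset_of_inter {Q R : ℤ × (Fin d → ℤ)} (hj : R.1 ≤ Q.1)
    (h : (dyadicCube d Q ∩ dyadicCube d R).Nonempty) : dyadicCube d Q ⊆ dyadicCube d R := by
  obtain ⟨x, hxQ, hxR⟩ := h
  intro y hy i
  exact interval_nest hj (hxR i).1 (hxR i).2 (hxQ i).1 (hxQ i).2 (hy i).1 (hy i).2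

lemma eq_of_subset_same {Q R : ℤ × (Fin d → ℤ)} (hj : Q.1 = R.1)
    (h : dyadicCube d Q ⊆ dyadicCube d R) : Q = R := by
  have hmem := h (corner_mem Q)
  have hc : (0:ℝ) < 2^(-Q.1) := zpow_pos (by norm_num) _
  have hk : Q.2 = R.2 := by
    funext i
    have h1 := (hmem i).1
    have h2 := (hmem i).2
    rw [← hj] at h1 h2
    simp only at h1 h2
    have l1 : (R.2 i : ℝ) ≤ Q.2 i := le_of_mul_le_mul_left h1 hc
    have l2 : (Q.2 i : ℝ) < R.2 i + 1 := lt_of_mul_lt_mul_left h2 hc.le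
    have : (R.2 i : ℤ) ≤ Q.2 i := by exact_mod_cast l1
    have : (Q.2 i : ℤ) < R.2 i + 1 := by exact_mod_cast l2
    omega
  exact Prod.ext hj hk

/-- Order relation: `Q ≤ R` iff cube Q ⊆ cube R and R is at larger-or-equal scale. -/
def rel (Q R : ℤ × (Fin d → ℤ)) : Prop := dyadicCube d Q ⊆ dyadicCube d R ∧ R.1 ≤ Q.1

lemma rel_refl (Q : ℤ × (Fin d → ℤ)) : rel Q Q := ⟨subset_rfl, le_rfl⟩

lemma rel_trans {Q R T : ℤ × (Fin d → ℤ)} (h1 : rel Q R) (h2 : rel R T) : rel Q T :=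
  ⟨h1.1.trans h2.1, h2.2.trans h1.2⟩

lemma rel_antisymm {Q R : ℤ × (Fin d → ℤ)} (h1 : rel Q R) (h2 : rel R Q) : Q = R :=
  eq_of_subset_same (le_antisymm h2.2 h1.2) h1.1

lemma rel_total_of_inter {Q R : ℤ × (Fin d → ℤ)}
    (h : (dyadicCube d Q ∩ dyadicCube d R).Nonempty) : rel Q R ∨ rel R Q := by
  rcases le_total R.1 Q.1 with hj | hj
  · exact Or.inl ⟨cube_subset_of_inter hj h, hj⟩
  · exact Or.inr ⟨cube_subset_of_inter hj ⟨h.choose, h.choose_spec.2, h.choose_spec.1⟩, hj⟩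

lemma lemmaA (μ : Measure (EuclideanSpace ℝ (Fin d))) (a : ℤ × (Fin d → ℤ) → NNReal) (c₃ : NNReal)
    (hpack : ∀ R, (∑' Q : {Q : ℤ × (Fin d → ℤ) // dyadicCube d Q ⊆ dyadicCube d R},
        (a Q.1 : ℝ≥0∞)) ≤ c₃ * μ (dyadicCube d R))
    (S : Set (ℤ × (Fin d → ℤ))) :
    ∑' Q, S.indicator (fun Q => (a Q : ℝ≥0∞)) Q ≤ c₃ * μ (⋃ Q ∈ S, dyadicCube d Q) := by
  classical
  rw [ENNReal.tsum_eq_iSup_sum]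
  refine iSup_le fun s => ?_
  set a' : ℤ × (Fin d → ℤ) → ℝ≥0∞ := fun Q => (a Q : ℝ≥0∞) with ha'
  set s' := s.filter (· ∈ S) with hs'
  have h1 : ∑ Q ∈ s, S.indicator a' Q = ∑ Q ∈ s', a' Q := by
    rw [hs', Finset.sum_filter]
    refine Finset.sum_congr rfl fun Q _ => ?_
    by_cases hQ : Q ∈ S <;> simp [hQ, Set.indicator]
  rw [h1]
  set M := s'.filter (fun R => ∀ Q ∈ s', rel R Q → Q = R) with hM
  have hmax : ∀ Q ∈ s', ∃ R ∈ M, rel Q R := by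
    intro Q hQ
    obtain ⟨R, hR, hmin⟩ := Finset.exists_min_image (s'.filter (rel Q ·)) (fun R => R.1)
      ⟨Q, Finset.mem_filter.2 ⟨hQ, rel_refl Q⟩⟩
    rw [Finset.mem_filter] at hR
    refine ⟨R, Finset.mem_filter.2 ⟨hR.1, ?_⟩, hR.2⟩
    intro Q' hQ' hrel
    have hQ'2 : Q' ∈ s'.filter (rel Q ·) := Finset.mem_filter.2 ⟨hQ', rel_trans hR.2 hrel⟩
    exact (eq_of_subset_same (le_antisymm (hmin Q' hQ'2) hrel.2) hrel.1).symm
  have hMS : ∀ R ∈ M, R ∈ S := fun R hR =>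
    (Finset.mem_filter.1 ((Finset.mem_filter.1 hR).1)).2
  have hdisj : (M : Set (ℤ × (Fin d → ℤ))).PairwiseDisjoint (fun R => dyadicCube d R) := by
    intro R hR R' hR' hne
    rw [Finset.mem_coe, hM, Finset.mem_filter] at hR hR'
    simp only [Function.onFun]
    rw [Set.disjoint_left]
    intro x hx hx'
    have hint : (dyadicCube d R ∩ dyadicCube d R').Nonempty := ⟨x, hx, hx'⟩
    rcases rel_total_of_inter hint with h | h
    · exact hne (hR.2 R' hR'.1 h).symm
    · exact hne (hR'.2 R hR.1 h)
  have step : ∑ Q ∈ s', a' Q ≤ ∑ R ∈ M, ∑ Q ∈ s', (if rel Q R then a' Q else 0) := by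
    rw [Finset.sum_comm]
    refine Finset.sum_le_sum fun Q hQ => ?_
    obtain ⟨R, hRM, hrel⟩ := hmax Q hQ
    calc a' Q = (if rel Q R then a' Q else 0) := by rw [if_pos hrel]
    _ ≤ ∑ R ∈ M, (if rel Q R then a' Q else 0) :=
        Finset.single_le_sum (f := fun R' => if rel Q R' then a' Q else 0)
          (fun _ _ => zero_le) hRM
  have step2 : ∀ R ∈ M, ∑ Q ∈ s', (if rel Q R then a' Q else 0) ≤ c₃ * μ (dyadicCube d R) := by
    intro R _
    refine le_trans ?_ (hpack R)
    have key : (∑ Q ∈ s', if rel Q R then a' Q else 0)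
        ≤ ∑' (x : ↑{Q : ℤ × (Fin d → ℤ) | dyadicCube d Q ⊆ dyadicCube d R}), a' ↑x := by
      rw [tsum_subtype {Q : ℤ × (Fin d → ℤ) | dyadicCube d Q ⊆ dyadicCube d R} a']
      refine le_trans ?_ (ENNReal.sum_le_tsum s')
      refine Finset.sum_le_sum fun Q _ => ?_
      by_cases h : rel Q R
      · rw [if_pos h]
        exact (Set.indicator_of_mem
          (show Q ∈ {Q | dyadicCube d Q ⊆ dyadicCube d R} from h.1) a').ge
      · rw [if_neg h]; exact zero_le
    exact key
  calc ∑ Q ∈ s', a' Q ≤ ∑ R ∈ M, ∑ Q ∈ s', (if rel Q R then a' Q else 0) := step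
  _ ≤ ∑ R ∈ M, c₃ * μ (dyadicCube d R) := Finset.sum_le_sum step2
  _ = c₃ * ∑ R ∈ M, μ (dyadicCube d R) := by rw [Finset.mul_sum]
  _ = c₃ * μ (⋃ R ∈ M, dyadicCube d R) := by
      rw [measure_biUnion_finset hdisj (fun R _ => measurableSet_dyadicCube R)]
  _ ≤ c₃ * μ (⋃ Q ∈ S, dyadicCube d Q) := by
      exact mul_le_mul_right (measure_mono (Set.iUnion₂_subset fun R hR =>
        Set.subset_biUnion_of_mem (hMS R hR))) _

end S10

open S10 in
/-- **dyadic Carleson embedding, supremum form.** If `{a_Q}` satisfies the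
packing condition `∑_{Q ⊆ R} a_Q ≤ c₃ μ(R)` for all dyadic cubes `R`, then
`∑_Q γ_Q a_Q ≤ c₃ ∫ sup_{Q ∋ x} γ_Q dμ(x)` for all non-negative `{γ_Q}`. -/
theorem statement10 (d : ℕ) (μ : Measure (EuclideanSpace ℝ (Fin d)))
    [IsLocallyFiniteMeasure μ]
    (a : ℤ × (Fin d → ℤ) → NNReal) (c₃ : NNReal)
    (hpack : ∀ R : ℤ × (Fin d → ℤ),
      (∑' Q : {Q : ℤ × (Fin d → ℤ) // dyadicCube d Q ⊆ dyadicCube d R}, (a Q.1 : ℝ≥0∞))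
        ≤ c₃ * μ (dyadicCube d R))
    (γ : ℤ × (Fin d → ℤ) → NNReal) :
    (∑' Q : ℤ × (Fin d → ℤ), (γ Q : ℝ≥0∞) * (a Q : ℝ≥0∞))
      ≤ (c₃ : ℝ≥0∞) *
          ∫⁻ x, ⨆ (Q : ℤ × (Fin d → ℤ)) (_ : x ∈ dyadicCube d Q), (γ Q : ℝ≥0∞) ∂μ := by
  classical
  set a' : ℤ × (Fin d → ℤ) → ℝ≥0∞ := fun Q => (a Q : ℝ≥0∞) with ha'
  set F : EuclideanSpace ℝ (Fin d) → ℝ≥0∞ :=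
    fun x => ⨆ (Q : ℤ × (Fin d → ℤ)) (_ : x ∈ dyadicCube d Q), (γ Q : ℝ≥0∞) with hF
  set E : ℝ → Set (EuclideanSpace ℝ (Fin d)) :=
    fun t => ⋃ Q ∈ {Q : ℤ × (Fin d → ℤ) | t < (γ Q : ℝ)}, dyadicCube d Q with hE
  have hEmeas : ∀ t, MeasurableSet (E t) := fun t =>
    MeasurableSet.biUnion (Set.to_countable _) (fun Q _ => measurableSet_dyadicCube Q)
  have hEanti : Antitone fun t => μ (E t) := by
    intro t t' h
    refine measure_mono (Set.iUnion₂_subset fun Q hQ => ?_)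
    exact Set.subset_biUnion_of_mem (lt_of_le_of_lt h hQ)
  -- Step 1 : layer-cake for each term
  have step1 : ∀ Q : ℤ × (Fin d → ℤ), (γ Q : ℝ≥0∞) * a' Q
      = ∫⁻ t in Set.Ioi (0:ℝ), (Set.Ioo (0:ℝ) ((γ Q : ℝ))).indicator (fun _ => a' Q) t := by
    intro Q
    rw [lintegral_indicator measurableSet_Ioo, setLIntegral_const,
      Measure.restrict_apply measurableSet_Ioo,
      Set.inter_eq_self_of_subset_left Set.Ioo_subset_Ioi_self,
      Real.volume_Ioo, sub_zero, ENNReal.ofReal_coe_nnreal, mul_comm]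
  calc (∑' Q : ℤ × (Fin d → ℤ), (γ Q : ℝ≥0∞) * a' Q)
      = ∑' Q : ℤ × (Fin d → ℤ),
          ∫⁻ t in Set.Ioi (0:ℝ), (Set.Ioo (0:ℝ) ((γ Q : ℝ))).indicator (fun _ => a' Q) t :=
        tsum_congr step1
    _ = ∫⁻ t in Set.Ioi (0:ℝ), ∑' Q : ℤ × (Fin d → ℤ),
          (Set.Ioo (0:ℝ) ((γ Q : ℝ))).indicator (fun _ => a' Q) t :=
        (lintegral_tsum fun Q => (measurable_const.indicator measurableSet_Ioo).aemeasurable).symm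
    _ ≤ ∫⁻ t in Set.Ioi (0:ℝ), (c₃ : ℝ≥0∞) * μ (E t) := by
        refine setLIntegral_mono (measurable_const.mul hEanti.measurable) ?_
        intro t ht
        have congrt : ∀ Q : ℤ × (Fin d → ℤ),
            (Set.Ioo (0:ℝ) ((γ Q : ℝ))).indicator (fun _ => a' Q) t
              = ({Q : ℤ × (Fin d → ℤ) | t < (γ Q : ℝ)}).indicator a' Q := by
          intro Q
          by_cases h : t < (γ Q : ℝ)
          · rw [Set.indicator_of_mem (Set.mem_Ioo.2 ⟨ht, h⟩),
              Set.indicator_of_mem (show Q ∈ {Q : ℤ × (Fin d → ℤ) | t < (γ Q : ℝ)} from h) a']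
          · rw [Set.indicator_of_notMem (fun hc => h (Set.mem_Ioo.1 hc).2),
              Set.indicator_of_notMem
                (show Q ∉ {Q : ℤ × (Fin d → ℤ) | t < (γ Q : ℝ)} from h) a']
        rw [tsum_congr congrt]
        exact lemmaA μ a c₃ hpack _
    _ = (c₃ : ℝ≥0∞) * ∫⁻ t in Set.Ioi (0:ℝ), μ (E t) :=
        lintegral_const_mul' _ _ ENNReal.coe_ne_top
    _ ≤ (c₃ : ℝ≥0∞) * ∫⁻ x, F x ∂μ := by
        refine mul_le_mul_right ?_ _
        -- Tonelli + layer cake upper bound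
        have e1 : (∫⁻ t in Set.Ioi (0:ℝ), μ (E t))
            = ∫⁻ t in Set.Ioi (0:ℝ), ∫⁻ x, (E t).indicator (fun _ => (1:ℝ≥0∞)) x ∂μ :=
          lintegral_congr fun t => (lintegral_indicator_one (hEmeas t)).symm
        rw [e1]
        have hU : MeasurableSet {p : ℝ × EuclideanSpace ℝ (Fin d) | p.2 ∈ E p.1} := by
          have : {p : ℝ × EuclideanSpace ℝ (Fin d) | p.2 ∈ E p.1}
              = ⋃ Q : ℤ × (Fin d → ℤ), (Set.Iio ((γ Q : ℝ))) ×ˢ dyadicCube d Q := by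
            ext p
            simp [hE, Set.mem_iUnion, Set.mem_prod, and_comm]
          rw [this]
          exact MeasurableSet.iUnion fun Q =>
            (measurableSet_Iio.prod (measurableSet_dyadicCube Q))
        have hmeasf : AEMeasurable (Function.uncurry fun (t : ℝ) (x : EuclideanSpace ℝ (Fin d)) =>
              (E t).indicator (fun _ => (1:ℝ≥0∞)) x)
            ((volume.restrict (Set.Ioi (0:ℝ))).prod μ) := by
          have : (Function.uncurry fun (t : ℝ) (x : EuclideanSpace ℝ (Fin d)) =>
              (E t).indicator (fun _ => (1:ℝ≥0∞)) x)
              = {p : ℝ × EuclideanSpace ℝ (Fin d) | p.2 ∈ E p.1}.indicator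
                  (fun _ => (1:ℝ≥0∞)) := by
            funext p
            rcases p with ⟨t, x⟩
            by_cases h : x ∈ E t
            · simp [Function.uncurry, Set.indicator_of_mem h,
                Set.indicator_of_mem (show (t,x) ∈ {p : ℝ × EuclideanSpace ℝ (Fin d) | p.2 ∈ E p.1} from h)]
            · simp [Function.uncurry, Set.indicator_of_notMem h,
                Set.indicator_of_notMem (show (t,x) ∉ {p : ℝ × EuclideanSpace ℝ (Fin d) | p.2 ∈ E p.1} from h)]
          rw [this]
          exact (measurable_one.indicator hU).aemeasurable
        rw [lintegral_lintegral_swap hmeasf]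
        refine lintegral_mono fun x => ?_
        -- inner integral ≤ F x
        set A : Set ℝ := ⋃ Q ∈ {Q : ℤ × (Fin d → ℤ) | x ∈ dyadicCube d Q}, Set.Iio ((γ Q : ℝ))
          with hA
        have hAmeas : MeasurableSet A :=
          MeasurableSet.biUnion (Set.to_countable _) (fun Q _ => measurableSet_Iio)
        have e2 : (fun t => (E t).indicator (fun _ => (1:ℝ≥0∞)) x)
            = A.indicator (fun _ => (1:ℝ≥0∞)) := by
          funext t
          have : x ∈ E t ↔ t ∈ A := by
            simp only [hE, hA, Set.mem_iUnion, Set.mem_setOf_eq, Set.mem_Iio]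
            tauto
          by_cases h : x ∈ E t
          · rw [Set.indicator_of_mem h, Set.indicator_of_mem (this.1 h)]
          · rw [Set.indicator_of_notMem h, Set.indicator_of_notMem (fun hc => h (this.2 hc))]
        rw [e2, lintegral_indicator hAmeas, setLIntegral_const,
          Measure.restrict_apply hAmeas, one_mul]
        -- volume (A ∩ Ioi 0) ≤ F x
        by_cases hFx : F x = ⊤
        · exact hFx ▸ le_top
        have hsub : A ∩ Set.Ioi (0:ℝ) ⊆ Set.Ioc 0 ((F x).toReal) := by
          rintro t ⟨htA, ht0⟩
          refine ⟨ht0, ?_⟩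
          simp only [hA, Set.mem_iUnion, Set.mem_setOf_eq, Set.mem_Iio] at htA
          obtain ⟨Q, hQx, htQ⟩ := htA
          have hle : ((γ Q : ℝ≥0∞)) ≤ F x := by
            rw [hF]
            exact le_iSup_of_le Q (le_iSup_of_le hQx le_rfl)
          have : (γ Q : ℝ) ≤ (F x).toReal := by
            have := ENNReal.toReal_mono hFx hle
            simpa using this
          linarith
        calc volume (A ∩ Set.Ioi (0:ℝ)) ≤ volume (Set.Ioc 0 ((F x).toReal)) :=
              measure_mono hsub
          _ = ENNReal.ofReal ((F x).toReal - 0) := Real.volume_Ioc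
          _ ≤ F x := by rw [sub_zero]; exact ENNReal.ofReal_toReal_le


end
end

section
/- Let μ be a Radon measure on ℝ^d, let D be the standard dyadic lattice of ℝ^d, and let {a_Q}_{Q∈D} be non-negative numbers such that for every R ∈ D one has ∑_{Q∈D : Q⊆R} a_Q ≤ c₃ μ(R). Then for every p ∈ (1,∞) there is a constant c, depending only on p and d, such that for every f ∈ L^p(μ), ∑_{Q∈D} |m_Q f|^p a_Q ≤ c c₃ ‖f‖_{L^p(μ)}^p. -/
open MeasureTheory Set ENNReal

noncomputable section

/-- floor of `a / n` for a natural `n`. -/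
lemma myFloorDivNat (a : ℝ) (n : ℕ) (hn : 0 < n) : ⌊a / (n : ℝ)⌋ = ⌊a⌋ / (n : ℤ) := by
  have hn' : (0:ℝ) < (n:ℝ) := by exact_mod_cast hn
  have hnz : (n:ℤ) ≠ 0 := by exact_mod_cast hn.ne'
  rw [Int.floor_eq_iff]
  constructor
  · rw [le_div_iff₀ hn']
    have h1 : ((⌊a⌋ / (n:ℤ)) * (n:ℤ) : ℤ) ≤ ⌊a⌋ := Int.ediv_mul_le _ hnz
    have h2 : (((⌊a⌋ / (n:ℤ)) * (n:ℤ) : ℤ) : ℝ) ≤ (⌊a⌋ : ℝ) := by exact_mod_cast h1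
    calc (↑(⌊a⌋ / (n:ℤ)) * (n:ℝ)) = (((⌊a⌋ / (n:ℤ)) * (n:ℤ) : ℤ) : ℝ) := by push_cast; ring
      _ ≤ (⌊a⌋ : ℝ) := h2
      _ ≤ a := Int.floor_le a
  · rw [div_lt_iff₀ hn']
    have h1 : ⌊a⌋ < (⌊a⌋ / (n:ℤ) + 1) * (n:ℤ) :=
      Int.lt_ediv_add_one_mul_self _ (by exact_mod_cast hn)
    have h1' : ⌊a⌋ + 1 ≤ (⌊a⌋ / (n:ℤ) + 1) * (n:ℤ) := Int.lt_iff_add_one_le.1 h1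
    have h2 : ((⌊a⌋:ℝ)) + 1 ≤ (((⌊a⌋ / (n:ℤ) + 1) * (n:ℤ) : ℤ) : ℝ) := by exact_mod_cast h1'
    have h3 := Int.lt_floor_add_one a
    push_cast at h2 ⊢
    linarith

lemma myFloorScale {j' j : ℤ} (h : j' ≤ j) {s t : ℝ}
    (hst : ⌊(2:ℝ)^j * s⌋ = ⌊(2:ℝ)^j * t⌋) : ⌊(2:ℝ)^j' * s⌋ = ⌊(2:ℝ)^j' * t⌋ := by
  set m : ℕ := 2 ^ (j - j').toNat with hm
  have hm0 : 0 < m := Nat.pow_pos (by norm_num)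
  have hmr : (m:ℝ) = (2:ℝ) ^ (j - j') := by
    rw [hm]
    push_cast
    rw [← zpow_natCast, Int.toNat_of_nonneg (sub_nonneg.2 h)]
  have key : ∀ u : ℝ, (2:ℝ)^j' * u = ((2:ℝ)^j * u) / m := by
    intro u
    rw [hmr, eq_div_iff (by positivity : ((2:ℝ) ^ (j - j')) ≠ 0)]
    rw [mul_comm ((2:ℝ)^j' * u), ← mul_assoc, ← zpow_add₀ (two_ne_zero)]
    ring_nf
  rw [key s, key t, myFloorDivNat _ _ hm0, myFloorDivNat _ _ hm0, hst]

lemma mem_dyadicCube_iff {d : ℕ} {Q : ℤ × (Fin d → ℤ)} {x : EuclideanSpace ℝ (Fin d)} :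
    x ∈ dyadicCube d Q ↔ ∀ i, ⌊(2:ℝ) ^ (Q.1) * x i⌋ = Q.2 i := by
  unfold dyadicCube
  simp only [Set.mem_setOf_eq]
  refine forall_congr' fun i => ?_
  have hA : (0:ℝ) < (2:ℝ) ^ (-Q.1) := by positivity
  have hB : (0:ℝ) < (2:ℝ) ^ (Q.1) := by positivity
  have hAB : (2:ℝ) ^ (-Q.1) * (2:ℝ) ^ (Q.1) = 1 := by
    rw [← zpow_add₀ (two_ne_zero)]; simp
  have hBA : ∀ u : ℝ, (2:ℝ) ^ (Q.1) * ((2:ℝ) ^ (-Q.1) * u) = u := by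
    intro u; rw [← mul_assoc, ← zpow_add₀ (two_ne_zero)]; simp
  have hAB' : ∀ u : ℝ, (2:ℝ) ^ (-Q.1) * ((2:ℝ) ^ (Q.1) * u) = u := by
    intro u; rw [← mul_assoc, ← zpow_add₀ (two_ne_zero)]; simp
  rw [Int.floor_eq_iff]
  constructor
  · rintro ⟨h1, h2⟩
    constructor
    · calc ((Q.2 i : ℝ)) = (2:ℝ) ^ (Q.1) * ((2:ℝ) ^ (-Q.1) * Q.2 i) := (hBA _).symm
        _ ≤ (2:ℝ) ^ (Q.1) * x i := mul_le_mul_of_nonneg_left h1 hB.le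
    · calc (2:ℝ) ^ (Q.1) * x i < (2:ℝ) ^ (Q.1) * ((2:ℝ) ^ (-Q.1) * (Q.2 i + 1)) :=
          mul_lt_mul_of_pos_left h2 hB
        _ = (Q.2 i : ℝ) + 1 := hBA _
  · rintro ⟨h1, h2⟩
    constructor
    · calc (2:ℝ) ^ (-Q.1) * (Q.2 i : ℝ) ≤ (2:ℝ) ^ (-Q.1) * ((2:ℝ) ^ (Q.1) * x i) :=
          mul_le_mul_of_nonneg_left h1 hA.le
        _ = x i := hAB' _
  -- ^ note second goal below
    · calc x i = (2:ℝ) ^ (-Q.1) * ((2:ℝ) ^ (Q.1) * x i) := (hAB' _).symm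
        _ < (2:ℝ) ^ (-Q.1) * ((Q.2 i : ℝ) + 1) := mul_lt_mul_of_pos_left h2 hA

lemma corner_mem_dyadicCube {d : ℕ} (Q : ℤ × (Fin d → ℤ)) :
    (WithLp.toLp 2 (fun i => (2:ℝ) ^ (-Q.1) * Q.2 i) : EuclideanSpace ℝ (Fin d)) ∈ dyadicCube d Q := by
  rw [mem_dyadicCube_iff]
  intro i
  simp only [PiLp.toLp_apply]
  have : (2:ℝ) ^ (Q.1) * ((2:ℝ) ^ (-Q.1) * Q.2 i) = (Q.2 i : ℝ) := by
    rw [← mul_assoc, ← zpow_add₀ (two_ne_zero)]; simp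
  rw [this, Int.floor_intCast]

lemma dyadic_nested_or_disjoint_aux {d : ℕ} (Q R : ℤ × (Fin d → ℤ)) (h : R.1 ≤ Q.1) :
    dyadicCube d Q ⊆ dyadicCube d R ∨ Disjoint (dyadicCube d Q) (dyadicCube d R) := by
  set z : EuclideanSpace ℝ (Fin d) := WithLp.toLp 2 (fun i => (2:ℝ) ^ (-Q.1) * Q.2 i) with hzdef
  have hz : z ∈ dyadicCube d Q := corner_mem_dyadicCube Q
  rw [mem_dyadicCube_iff] at hz
  by_cases hc : ∀ i, ⌊(2:ℝ) ^ (R.1) * z i⌋ = R.2 i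
  · left
    intro x hx
    rw [mem_dyadicCube_iff] at hx ⊢
    intro i
    have := myFloorScale h ((hx i).trans (hz i).symm)
    exact this.trans (hc i)
  · right
    push_neg at hc
    obtain ⟨i, hi⟩ := hc
    rw [Set.disjoint_left]
    intro x hxQ hxR
    rw [mem_dyadicCube_iff] at hxQ hxR
    have h2 := myFloorScale h ((hxQ i).trans (hz i).symm)
    exact hi (h2.symm.trans (hxR i))

lemma dyadic_nested_or_disjoint {d : ℕ} (Q R : ℤ × (Fin d → ℤ)) :
    dyadicCube d Q ⊆ dyadicCube d R ∨ dyadicCube d R ⊆ dyadicCube d Q ∨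
      Disjoint (dyadicCube d Q) (dyadicCube d R) := by
  rcases le_total R.1 Q.1 with h | h
  · rcases dyadic_nested_or_disjoint_aux Q R h with h1 | h1
    · exact Or.inl h1
    · exact Or.inr (Or.inr h1)
  · rcases dyadic_nested_or_disjoint_aux R Q h with h1 | h1
    · exact Or.inr (Or.inl h1)
    · exact Or.inr (Or.inr h1.symm)

lemma measurableSet_dyadicCube {d : ℕ} (Q : ℤ × (Fin d → ℤ)) :
    MeasurableSet (dyadicCube d Q) := by
  have : dyadicCube d Q = ⋂ i, (fun x : EuclideanSpace ℝ (Fin d) => x i) ⁻¹'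
      (Set.Ico ((2:ℝ) ^ (-Q.1) * Q.2 i) ((2:ℝ) ^ (-Q.1) * (Q.2 i + 1))) := by
    ext x
    simp [dyadicCube, Set.mem_iInter, Set.mem_Ico]
  rw [this]
  exact MeasurableSet.iInter fun i =>
    ((EuclideanSpace.proj i).continuous.measurable) measurableSet_Ico

lemma measure_dyadicCube_lt_top {d : ℕ} (μ : Measure (EuclideanSpace ℝ (Fin d)))
    [IsLocallyFiniteMeasure μ] (Q : ℤ × (Fin d → ℤ)) : μ (dyadicCube d Q) < ∞ := by
  set Rr : ℝ := Real.sqrt (∑ i : Fin d, ((2:ℝ) ^ (-Q.1) * (|(Q.2 i : ℝ)| + 1))^2) with hRr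
  have hsub : dyadicCube d Q ⊆ Metric.closedBall 0 Rr := by
    intro x hx
    rw [Metric.mem_closedBall, dist_zero_right, EuclideanSpace.norm_eq]
    apply Real.sqrt_le_sqrt
    apply Finset.sum_le_sum
    intro i _
    have h1 := (hx i).1
    have h2 := (hx i).2
    have hA : (0:ℝ) < (2:ℝ) ^ (-Q.1) := by positivity
    have hk1 : (Q.2 i : ℝ) ≤ |(Q.2 i : ℝ)| := le_abs_self _
    have hk2 : -|(Q.2 i : ℝ)| ≤ (Q.2 i : ℝ) := neg_abs_le _
    have habs : |x i| ≤ (2:ℝ) ^ (-Q.1) * (|(Q.2 i : ℝ)| + 1) := by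
      rw [abs_le]
      constructor <;> nlinarith
    rw [Real.norm_eq_abs]
    calc |x i| ^ 2 ≤ ((2:ℝ) ^ (-Q.1) * (|(Q.2 i : ℝ)| + 1)) ^ 2 := by
          apply pow_le_pow_left₀ (abs_nonneg _) habs
      _ = _ := rfl
  exact lt_of_le_of_lt (measure_mono hsub)
    ((isCompact_closedBall _ _).measure_lt_top)



lemma dyadicCube_nonempty {d : ℕ} (Q : ℤ × (Fin d → ℤ)) : (dyadicCube d Q).Nonempty :=
  ⟨_, corner_mem_dyadicCube Q⟩

lemma exists_maximal_disjoint {X : Type*} (C : Finset (Set X))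
    (hC : ∀ s ∈ C, ∀ t ∈ C, s ⊆ t ∨ t ⊆ s ∨ Disjoint s t) :
    ∃ T ⊆ C, (∀ s ∈ C, ∃ t ∈ T, s ⊆ t) ∧ (T : Set (Set X)).Pairwise Disjoint := by
  classical
  induction C using Finset.strongInduction with
  | _ C ih =>
    rcases C.eq_empty_or_nonempty with rfl | hne
    · exact ⟨∅, Finset.empty_subset _, by simp, by simp⟩
    obtain ⟨t, htC, hmax⟩ := C.exists_maximal hne
    set C' := C.filter (fun s => ¬ s ⊆ t) with hC'def
    have hC'ss : C' ⊂ C := Finset.filter_ssubset.2 ⟨t, htC, by simp⟩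
    have hC'sub : C' ⊆ C := Finset.filter_subset _ _
    obtain ⟨T', hT'C', hcov', hdisj'⟩ := ih C' hC'ss
      (fun s hs u hu => hC s (hC'sub hs) u (hC'sub hu))
    have hT'C : T' ⊆ C := hT'C'.trans hC'sub
    refine ⟨insert t T', Finset.insert_subset htC hT'C, ?_, ?_⟩
    · intro s hs
      by_cases hst : s ⊆ t
      · exact ⟨t, Finset.mem_insert_self _ _, hst⟩
      · obtain ⟨u, hu, hsu⟩ := hcov' s (Finset.mem_filter.2 ⟨hs, hst⟩)
        exact ⟨u, Finset.mem_insert_of_mem hu, hsu⟩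
    · have hdisjt : ∀ u ∈ T', Disjoint t u := by
        intro u hu
        obtain ⟨huC, hunt⟩ := Finset.mem_filter.1 (hT'C' hu)
        rcases hC u huC t htC with h1 | h2 | h3
        · exact absurd h1 hunt
        · have hnlt : ¬ t ⊂ u := fun hlt => hlt.2 (hmax huC hlt.1)
          have : u = t := by
            by_contra hne'
            exact hnlt (lt_of_le_of_ne h2 (Ne.symm hne'))
          exact absurd (this ▸ Set.Subset.refl u) hunt
        · exact h3.symm
      rw [Finset.coe_insert,
        Set.pairwise_insert]
      exact ⟨hdisj', fun b hb _ => ⟨hdisjt b hb, (hdisjt b hb).symm⟩⟩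


lemma key_lemma {d : ℕ} (μ : Measure (EuclideanSpace ℝ (Fin d)))
    (a : ℤ × (Fin d → ℤ) → NNReal) (c₃ : NNReal)
    (hpack : ∀ R : ℤ × (Fin d → ℤ),
      (∑' Q : {Q : ℤ × (Fin d → ℤ) // dyadicCube d Q ⊆ dyadicCube d R}, (a Q.1 : ℝ≥0∞))
        ≤ c₃ * μ (dyadicCube d R))
    (P : ℤ × (Fin d → ℤ) → Prop) (G : EuclideanSpace ℝ (Fin d) → ℝ≥0∞)
    (hG : ∀ Q, P Q → μ (dyadicCube d Q) ≤ ∫⁻ x in dyadicCube d Q, G x ∂μ) :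
    (∑' Q : {Q : ℤ × (Fin d → ℤ) // P Q}, (a Q.1 : ℝ≥0∞)) ≤ c₃ * ∫⁻ x, G x ∂μ := by
  classical
  rw [ENNReal.tsum_eq_iSup_sum]
  refine iSup_le fun S => ?_
  set C : Finset (Set (EuclideanSpace ℝ (Fin d))) :=
    S.image (fun q => dyadicCube d q.1) with hCdef
  have hC : ∀ s ∈ C, ∀ t ∈ C, s ⊆ t ∨ t ⊆ s ∨ Disjoint s t := by
    intro s hs t ht
    obtain ⟨qs, _, rfl⟩ := Finset.mem_image.1 hs
    obtain ⟨qt, _, rfl⟩ := Finset.mem_image.1 ht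
    exact dyadic_nested_or_disjoint _ _
  obtain ⟨T, hTC, hcov, hdisj⟩ := exists_maximal_disjoint C hC
  have hrep : ∀ t ∈ T, ∃ q : {Q : ℤ × (Fin d → ℤ) // P Q}, q ∈ S ∧ dyadicCube d q.1 = t := by
    intro t ht
    obtain ⟨q, hq, rfl⟩ := Finset.mem_image.1 (hTC ht)
    exact ⟨q, hq, rfl⟩
  choose rep hrepS hrepEq using hrep
  -- buckets
  set B : Set (EuclideanSpace ℝ (Fin d)) → Finset {Q : ℤ × (Fin d → ℤ) // P Q} :=
    fun t => S.filter (fun q => dyadicCube d q.1 ⊆ t) with hBdef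
  have hSsub : S ⊆ T.biUnion B := by
    intro q hq
    have hmem : dyadicCube d q.1 ∈ C := Finset.mem_image_of_mem _ hq
    obtain ⟨t, htT, hsub⟩ := hcov _ hmem
    exact Finset.mem_biUnion.2 ⟨t, htT, Finset.mem_filter.2 ⟨hq, hsub⟩⟩
  have hBdisj : Set.PairwiseDisjoint (↑T) B := by
    intro t ht t' ht' hne
    simp only [Function.onFun]
    rw [Finset.disjoint_left]
    intro q hq hq'
    have h1 := (Finset.mem_filter.1 hq).2
    have h2 := (Finset.mem_filter.1 hq').2
    obtain ⟨x, hx⟩ := dyadicCube_nonempty q.1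
    exact (hdisj ht ht' hne).ne_of_mem (h1 hx) (h2 hx) rfl
  have step1 : ∑ q ∈ S, (a q.1 : ℝ≥0∞) ≤ ∑ t ∈ T, ∑ q ∈ B t, (a q.1 : ℝ≥0∞) := by
    rw [← Finset.sum_biUnion hBdisj]
    exact Finset.sum_le_sum_of_subset hSsub
  have step2 : ∀ t ∈ T, ∑ q ∈ B t, (a q.1 : ℝ≥0∞) ≤ c₃ * ∫⁻ x in t, G x ∂μ := by
    intro t ht
    have hte : t = dyadicCube d (rep t ht).1 := (hrepEq t ht).symm
    have hsum : ∑ q ∈ B t, (a q.1 : ℝ≥0∞)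
        ≤ ∑' Q : {Q : ℤ × (Fin d → ℤ) // dyadicCube d Q ⊆ dyadicCube d (rep t ht).1},
            (a Q.1 : ℝ≥0∞) := by
      set F : Finset {Q : ℤ × (Fin d → ℤ) // dyadicCube d Q ⊆ dyadicCube d (rep t ht).1} :=
        (B t).attach.image (fun q => ⟨q.1.1, by
          rw [hrepEq t ht]
          exact (Finset.mem_filter.1 q.2).2⟩) with hF
      have hinj : ∀ q ∈ (B t).attach, ∀ q' ∈ (B t).attach,
          (⟨q.1.1, by rw [hrepEq t ht]; exact (Finset.mem_filter.1 q.2).2⟩ :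
            {Q : ℤ × (Fin d → ℤ) // dyadicCube d Q ⊆ dyadicCube d (rep t ht).1}) =
          ⟨q'.1.1, by rw [hrepEq t ht]; exact (Finset.mem_filter.1 q'.2).2⟩ → q = q' := by
        intro q _ q' _ h
        have h2 : q.1.1 = q'.1.1 := Subtype.mk_eq_mk.1 h
        exact Subtype.ext (Subtype.ext h2)
      have he : ∑ Q ∈ F, (a Q.1 : ℝ≥0∞) = ∑ q ∈ (B t).attach, (a q.1.1 : ℝ≥0∞) :=
        Finset.sum_image hinj
      calc ∑ q ∈ B t, (a q.1 : ℝ≥0∞) = ∑ q ∈ (B t).attach, (a q.1.1 : ℝ≥0∞) :=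
            (Finset.sum_attach _ _).symm
        _ = ∑ Q ∈ F, (a Q.1 : ℝ≥0∞) := he.symm
        _ ≤ _ := ENNReal.sum_le_tsum F
    calc ∑ q ∈ B t, (a q.1 : ℝ≥0∞) ≤ _ := hsum
      _ ≤ c₃ * μ (dyadicCube d (rep t ht).1) := hpack _
      _ ≤ c₃ * ∫⁻ x in dyadicCube d (rep t ht).1, G x ∂μ :=
          mul_le_mul_right (hG _ (rep t ht).2) _
      _ = c₃ * ∫⁻ x in t, G x ∂μ := by rw [← hte]
  calc ∑ q ∈ S, (a q.1 : ℝ≥0∞) ≤ ∑ t ∈ T, ∑ q ∈ B t, (a q.1 : ℝ≥0∞) := step1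
    _ ≤ ∑ t ∈ T, c₃ * ∫⁻ x in t, G x ∂μ := Finset.sum_le_sum step2
    _ = c₃ * ∑ t ∈ T, ∫⁻ x in t, G x ∂μ := by rw [Finset.mul_sum]
    _ = c₃ * ∫⁻ x in (⋃ t ∈ T, t), G x ∂μ := by
        rw [lintegral_biUnion_finset (f := G) hdisj ?hm]
        case hm =>
          intro t ht
          obtain ⟨q, hq, rfl⟩ := Finset.mem_image.1 (hTC ht)
          exact measurableSet_dyadicCube _
    _ ≤ c₃ * ∫⁻ x, G x ∂μ :=
        mul_le_mul_right (setLIntegral_le_lintegral _ _) _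


lemma ofReal_two_zpow (m : ℤ) : ENNReal.ofReal ((2:ℝ) ^ m) = (2:ℝ≥0∞) ^ m := by
  rcases m with k | k
  · rw [Int.ofNat_eq_coe, zpow_natCast, zpow_natCast, ENNReal.ofReal_pow (by norm_num)]
    norm_num
  · rw [zpow_negSucc, zpow_negSucc, ENNReal.ofReal_inv_of_pos (by positivity),
      ENNReal.ofReal_pow (by norm_num)]
    norm_num


/-- **dyadic Carleson embedding, `L^p` form.** If `{a_Q}` satisfies the
packing condition `∑_{Q ⊆ R} a_Q ≤ c₃ μ(R)` for all dyadic cubes `R`, then for `1 < p < ∞`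
there is `c = c(p,d)` with `∑_Q |m_Q f|^p a_Q ≤ c c₃ ‖f‖_{L^p(μ)}^p` for all `f ∈ L^p(μ)`. -/
theorem statement11 (d : ℕ) (p : ℝ) (hp : 1 < p) :
    ∃ c : ℝ, 0 < c ∧
      ∀ (μ : Measure (EuclideanSpace ℝ (Fin d))), IsLocallyFiniteMeasure μ →
      ∀ (a : ℤ × (Fin d → ℤ) → NNReal) (c₃ : NNReal),
        (∀ R : ℤ × (Fin d → ℤ),
          (∑' Q : {Q : ℤ × (Fin d → ℤ) // dyadicCube d Q ⊆ dyadicCube d R}, (a Q.1 : ℝ≥0∞))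
            ≤ c₃ * μ (dyadicCube d R)) →
        ∀ f : EuclideanSpace ℝ (Fin d) → ℝ, MemLp f (ENNReal.ofReal p) μ →
          (∑' Q : ℤ × (Fin d → ℤ),
              ENNReal.ofReal (|mQ μ (dyadicCube d Q) f| ^ p) * (a Q : ℝ≥0∞))
            ≤ ENNReal.ofReal c * (c₃ : ℝ≥0∞) * eLpNorm f (ENNReal.ofReal p) μ ^ p := by
  have hp0 : (0:ℝ) < p := lt_trans one_pos hp
  have hp1 : (0:ℝ) < p - 1 := by linarith
  have hu0 : (0:ℝ) < (1:ℝ) - (2:ℝ) ^ (-(p-1)) := by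
    have h1 : (2:ℝ) ^ (-(p-1)) < 1 :=
      Real.rpow_lt_one_of_one_lt_of_neg one_lt_two (by linarith)
    linarith
  refine ⟨(2:ℝ) ^ (p+1) * ((2:ℝ) ^ (p-1) * ((1:ℝ) - (2:ℝ) ^ (-(p-1)))⁻¹), by positivity, ?_⟩
  intro μ hloc a c₃ hpack f hf
  haveI := hloc
  set r : ℝ≥0∞ := ENNReal.ofReal ((2:ℝ) ^ (-(p-1))) with hrdef
  have hrlt1 : r < 1 := by
    rw [hrdef, ← ENNReal.ofReal_one]
    exact (ENNReal.ofReal_lt_ofReal_iff one_pos).2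
      (Real.rpow_lt_one_of_one_lt_of_neg one_lt_two (by linarith))
  have h1r : (0:ℝ≥0∞) < 1 - r := tsub_pos_iff_lt.2 hrlt1
  set A : ℤ × (Fin d → ℤ) → ℝ≥0∞ :=
    fun Q => (∫⁻ x in dyadicCube d Q, (‖f x‖₊ : ℝ≥0∞) ∂μ) / μ (dyadicCube d Q) with hAdef
  set τ : ℤ → ℝ≥0∞ := fun n => ENNReal.ofReal ((2:ℝ) ^ (n:ℝ)) with hτdef
  have hτpos : ∀ n, 0 < τ n := fun n => ENNReal.ofReal_pos.2 (Real.rpow_pos_of_pos two_pos _)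
  have hτtop : ∀ n : ℤ, τ n ≠ ∞ := fun n => ENNReal.ofReal_ne_top
  have hτz : ∀ m : ℤ, τ m = (2:ℝ≥0∞) ^ m := by
    intro m
    rw [hτdef]
    simp only []
    rw [Real.rpow_intCast 2 m]
    exact ofReal_two_zpow m
  have hτd : ∀ n : ℤ, τ n = 2 * τ (n-1) := by
    intro n
    conv_lhs => rw [hτz, show n = (n-1) + 1 by ring,
      ENNReal.zpow_add (two_ne_zero : (2:ℝ≥0∞) ≠ 0) (by norm_num : (2:ℝ≥0∞) ≠ ∞) (n-1) 1]
    rw [hτz, zpow_one]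
    ring
  have hIfin : ∀ Q, (∫⁻ x in dyadicCube d Q, (‖f x‖₊:ℝ≥0∞) ∂μ) ≠ ∞ := by
    intro Q
    haveI : IsFiniteMeasure (μ.restrict (dyadicCube d Q)) := by
      constructor
      rw [Measure.restrict_apply_univ]
      exact measure_dyadicCube_lt_top μ Q
    have h1 : MemLp f (ENNReal.ofReal p) (μ.restrict (dyadicCube d Q)) := hf.restrict _
    have h2 : MemLp f 1 (μ.restrict (dyadicCube d Q)) := h1.mono_exponent (by
      rw [← ENNReal.ofReal_one]
      exact ENNReal.ofReal_le_ofReal hp.le)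
    exact (memLp_one_iff_integrable.1 h2).2.ne
  have hAfin : ∀ Q, A Q ≠ ∞ := by
    intro Q
    rcases eq_or_ne (μ (dyadicCube d Q)) 0 with h0 | h0
    · have hres : (μ.restrict (dyadicCube d Q)) = 0 := Measure.restrict_eq_zero.2 h0
      simp [hAdef, hres, h0]
    · exact (ENNReal.div_lt_top (hIfin Q) h0).ne
  have hmQle : ∀ Q, ENNReal.ofReal (|mQ μ (dyadicCube d Q) f| ^ p) ≤ A Q ^ p := by
    intro Q
    have base : ENNReal.ofReal |mQ μ (dyadicCube d Q) f| ≤ A Q := by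
      rcases eq_or_ne (μ (dyadicCube d Q)) 0 with h0 | h0
      · have : mQ μ (dyadicCube d Q) f = 0 := by
          unfold mQ
          rw [h0]
          simp
        rw [this]
        simp
      · have hμfin : μ (dyadicCube d Q) ≠ ∞ := (measure_dyadicCube_lt_top μ Q).ne
        have htR : 0 < (μ (dyadicCube d Q)).toReal := ENNReal.toReal_pos h0 hμfin
        unfold mQ
        rw [abs_div, abs_of_pos htR, ENNReal.ofReal_div_of_pos htR, hAdef]
        simp only []
        rw [ENNReal.ofReal_toReal hμfin]
        refine ENNReal.div_le_div_right ?_ _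
        rw [← Real.norm_eq_abs, ofReal_norm]
        exact enorm_integral_le_lintegral_enorm _
    calc ENNReal.ofReal (|mQ μ (dyadicCube d Q) f| ^ p)
        = ENNReal.ofReal |mQ μ (dyadicCube d Q) f| ^ p :=
          (ENNReal.ofReal_rpow_of_nonneg (abs_nonneg _) hp0.le).symm
      _ ≤ A Q ^ p := ENNReal.rpow_le_rpow base hp0.le
  set g : ℤ → EuclideanSpace ℝ (Fin d) → ℝ≥0∞ :=
    fun n x => if τ (n-1) < (‖f x‖₊ : ℝ≥0∞) then (‖f x‖₊ : ℝ≥0∞) else 0 with hgdef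
  have hgmeas : ∀ n, AEMeasurable (g n) μ := by
    intro n
    have h1 : AEMeasurable (fun x => (‖f x‖₊ : ℝ≥0∞)) μ := hf.aestronglyMeasurable.enorm
    have h2 : Measurable (fun t : ℝ≥0∞ => if τ (n-1) < t then t else 0) :=
      Measurable.ite (measurableSet_lt measurable_const measurable_id)
        measurable_id measurable_const
    exact h2.comp_aemeasurable h1
  -- weak type estimate
  have hweak : ∀ n : ℤ, (∑' Q : {Q : ℤ × (Fin d → ℤ) // τ n < A Q}, (a Q.1 : ℝ≥0∞))
      ≤ (c₃ : ℝ≥0∞) * ((τ (n-1))⁻¹ * ∫⁻ x, g n x ∂μ) := by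
    intro n
    have hG : ∀ Q, τ n < A Q →
        μ (dyadicCube d Q) ≤ ∫⁻ x in dyadicCube d Q, (τ (n-1))⁻¹ * g n x ∂μ := by
      intro Q hPQ
      have hμ0 : μ (dyadicCube d Q) ≠ 0 := by
        intro h0
        have hres : (μ.restrict (dyadicCube d Q)) = 0 := Measure.restrict_eq_zero.2 h0
        rw [hAdef] at hPQ
        simp only [hres, h0] at hPQ
        simp at hPQ
      have hμfin := (measure_dyadicCube_lt_top μ Q).ne
      have h1 : τ n * μ (dyadicCube d Q) < ∫⁻ x in dyadicCube d Q, (‖f x‖₊:ℝ≥0∞) ∂μ := by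
        rw [hAdef] at hPQ
        exact (ENNReal.lt_div_iff_mul_lt (Or.inl hμ0) (Or.inl hμfin)).1 hPQ
      have h2 : ∫⁻ x in dyadicCube d Q, (‖f x‖₊:ℝ≥0∞) ∂μ
          ≤ (∫⁻ x in dyadicCube d Q, g n x ∂μ) + τ (n-1) * μ (dyadicCube d Q) := by
        have hpt : ∀ x, (‖f x‖₊:ℝ≥0∞) ≤ g n x + τ (n-1) := by
          intro x
          by_cases hc : τ (n-1) < (‖f x‖₊:ℝ≥0∞)
          · have : g n x = (‖f x‖₊:ℝ≥0∞) := by rw [hgdef]; simp only [if_pos hc]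
            rw [this]
            exact le_self_add
          · push_neg at hc
            have : g n x = 0 := by rw [hgdef]; simp only [if_neg (not_lt.2 hc)]
            rw [this, zero_add]
            exact hc
        calc ∫⁻ x in dyadicCube d Q, (‖f x‖₊:ℝ≥0∞) ∂μ
            ≤ ∫⁻ x in dyadicCube d Q, (g n x + τ (n-1)) ∂μ := lintegral_mono fun x => hpt x
          _ = (∫⁻ x in dyadicCube d Q, g n x ∂μ) + τ (n-1) * μ (dyadicCube d Q) := by
              rw [lintegral_add_right _ measurable_const, setLIntegral_const]
      have h3 : τ (n-1) * μ (dyadicCube d Q) < ∫⁻ x in dyadicCube d Q, g n x ∂μ := by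
        have h4 := lt_of_lt_of_le h1 h2
        rw [hτd n, two_mul, add_mul] at h4
        exact (ENNReal.add_lt_add_iff_right (ENNReal.mul_ne_top (hτtop _) hμfin)).1 h4
      calc μ (dyadicCube d Q) = (τ (n-1))⁻¹ * (τ (n-1) * μ (dyadicCube d Q)) := by
            rw [← mul_assoc, ENNReal.inv_mul_cancel (hτpos _).ne' (hτtop _), one_mul]
        _ ≤ (τ (n-1))⁻¹ * ∫⁻ x in dyadicCube d Q, g n x ∂μ := mul_le_mul_right h3.le _
        _ = ∫⁻ x in dyadicCube d Q, (τ (n-1))⁻¹ * g n x ∂μ :=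
            (lintegral_const_mul' _ _ (ENNReal.inv_ne_top.2 (hτpos _).ne')).symm
    have hk := key_lemma μ a c₃ hpack (fun Q => τ n < A Q)
      (fun x => (τ (n-1))⁻¹ * g n x) hG
    calc (∑' Q : {Q : ℤ × (Fin d → ℤ) // τ n < A Q}, (a Q.1 : ℝ≥0∞))
        ≤ (c₃:ℝ≥0∞) * ∫⁻ x, (τ (n-1))⁻¹ * g n x ∂μ := hk
      _ = (c₃ : ℝ≥0∞) * ((τ (n-1))⁻¹ * ∫⁻ x, g n x ∂μ) := by
          rw [lintegral_const_mul' _ _ (ENNReal.inv_ne_top.2 (hτpos _).ne')]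
  -- layer decomposition
  set w : ℤ → (ℤ × (Fin d → ℤ)) → ℝ≥0∞ := fun n =>
    Set.indicator {Q' | A Q' ∈ Set.Ioc (τ n) (τ (n+1))}
      (fun Q' => τ (n+1) ^ p * (a Q' : ℝ≥0∞)) with hwdef
  have step1 : ∀ Q, ENNReal.ofReal (|mQ μ (dyadicCube d Q) f| ^ p) * (a Q : ℝ≥0∞)
      ≤ ∑' n : ℤ, w n Q := by
    intro Q
    rcases eq_or_ne (A Q) 0 with h0 | h0
    · have hz : ENNReal.ofReal (|mQ μ (dyadicCube d Q) f| ^ p) = 0 := by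
        have h := hmQle Q
        rw [h0, ENNReal.zero_rpow_of_pos hp0] at h
        exact le_antisymm h zero_le
      rw [hz, zero_mul]
      exact zero_le
    · obtain ⟨n, hn⟩ := ENNReal.exists_mem_Ioc_zpow h0 (hAfin Q) one_lt_two
        (by norm_num : (2:ℝ≥0∞) ≠ ⊤)
      have hmem : Q ∈ {Q' | A Q' ∈ Set.Ioc (τ n) (τ (n+1))} := by
        rw [Set.mem_setOf_eq, hτz n, hτz (n+1)]
        exact hn
      have hterm : ENNReal.ofReal (|mQ μ (dyadicCube d Q) f| ^ p) * (a Q : ℝ≥0∞) ≤ w n Q := by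
        rw [hwdef]
        simp only []
        rw [Set.indicator_of_mem hmem]
        exact mul_le_mul_left ((hmQle Q).trans
          (ENNReal.rpow_le_rpow hmem.2 hp0.le)) _
      exact hterm.trans (ENNReal.le_tsum n)
  have step3 : ∀ n : ℤ, (∑' Q : ℤ × (Fin d → ℤ), w n Q)
      ≤ (c₃:ℝ≥0∞) * ((τ (n+1) ^ p * (τ (n-1))⁻¹) * ∫⁻ x, g n x ∂μ) := by
    intro n
    have ha : ∀ Q, w n Q ≤ τ (n+1) ^ p *
        Set.indicator {Q' | τ n < A Q'} (fun Q' => (a Q' : ℝ≥0∞)) Q := by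
      intro Q
      by_cases hmem : Q ∈ {Q' | A Q' ∈ Set.Ioc (τ n) (τ (n+1))}
      · rw [hwdef]
        simp only []
        rw [Set.indicator_of_mem hmem,
          Set.indicator_of_mem (show Q ∈ {Q' | τ n < A Q'} from hmem.1)]
      · rw [hwdef]
        simp only []
        rw [Set.indicator_of_notMem hmem]
        exact zero_le
    calc (∑' Q : ℤ × (Fin d → ℤ), w n Q)
        ≤ ∑' Q : ℤ × (Fin d → ℤ), τ (n+1) ^ p *
            Set.indicator {Q' | τ n < A Q'} (fun Q' => (a Q' : ℝ≥0∞)) Q :=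
          Summable.tsum_le_tsum ha ENNReal.summable ENNReal.summable
      _ = τ (n+1) ^ p * ∑' Q : ℤ × (Fin d → ℤ),
            Set.indicator {Q' | τ n < A Q'} (fun Q' => (a Q' : ℝ≥0∞)) Q :=
          ENNReal.tsum_mul_left
      _ ≤ τ (n+1) ^ p * ((c₃ : ℝ≥0∞) * ((τ (n-1))⁻¹ * ∫⁻ x, g n x ∂μ)) := by
          rw [← tsum_subtype]
          exact mul_le_mul_right (hweak n) _
      _ = (c₃:ℝ≥0∞) * ((τ (n+1) ^ p * (τ (n-1))⁻¹) * ∫⁻ x, g n x ∂μ) := by ring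
  have hexp : ∀ n : ℤ, τ (n+1) ^ p * (τ (n-1))⁻¹
      = ENNReal.ofReal ((2:ℝ) ^ (p+1)) * ENNReal.ofReal ((2:ℝ) ^ ((n:ℝ) * (p-1))) := by
    intro n
    have ha : τ (n+1) ^ p = ENNReal.ofReal ((2:ℝ) ^ ((((n:ℝ))+1) * p)) := by
      rw [hτdef]
      simp only []
      rw [ENNReal.ofReal_rpow_of_pos (Real.rpow_pos_of_pos two_pos _)]
      congr 1
      rw [← Real.rpow_mul (by norm_num : (0:ℝ) ≤ 2)]
      congr 1
      push_cast
      ring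
    have hb : (τ (n-1))⁻¹ = ENNReal.ofReal ((2:ℝ) ^ (-((n:ℝ)-1))) := by
      rw [hτdef]
      simp only []
      rw [← ENNReal.ofReal_inv_of_pos (Real.rpow_pos_of_pos two_pos _),
        ← Real.rpow_neg (by norm_num : (0:ℝ) ≤ 2)]
      congr 1
      push_cast
      ring
    rw [ha, hb, ← ENNReal.ofReal_mul (by positivity), ← ENNReal.ofReal_mul (by positivity),
      ← Real.rpow_add two_pos, ← Real.rpow_add two_pos]
    congr 1
    ring
  -- pointwise bound
  have hpoint : ∀ x, (∑' n : ℤ, ENNReal.ofReal ((2:ℝ) ^ ((n:ℝ)*(p-1))) * g n x)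
      ≤ (ENNReal.ofReal ((2:ℝ)^(p-1)) * (1 - r)⁻¹) * (‖f x‖₊:ℝ≥0∞) ^ p := by
    intro x
    rcases eq_or_ne ((‖f x‖₊:ℝ≥0∞)) 0 with hF0 | hF0
    · have hz : ∀ n : ℤ, ENNReal.ofReal ((2:ℝ) ^ ((n:ℝ)*(p-1))) * g n x = 0 := by
        intro n
        have : g n x = 0 := by
          rw [hgdef]
          simp only [hF0]
          simp
        rw [this, mul_zero]
      rw [tsum_congr hz]
      simp
    · have hFtop : (‖f x‖₊:ℝ≥0∞) ≠ ∞ := coe_ne_top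
      set s : ℝ := (‖f x‖₊:ℝ≥0∞).toReal with hsdef
      have hs0 : 0 < s := ENNReal.toReal_pos hF0 hFtop
      obtain ⟨M, hM1, hM2⟩ := exists_mem_Ioc_zpow hs0 (one_lt_two : (1:ℝ) < 2)
      set N : ℤ := M + 1 with hNdef
      have hup : s ≤ (2:ℝ) ^ ((N:ℝ)) := by
        rw [Real.rpow_intCast]
        exact hM2
      have hlow : (2:ℝ) ^ ((N:ℝ) - 1) < s := by
        have he : ((N:ℝ) - 1) = ((M:ℤ):ℝ) := by rw [hNdef]; push_cast; ring
        rw [he, Real.rpow_intCast]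
        exact hM1
      have hterm : ∀ n : ℤ, ENNReal.ofReal ((2:ℝ) ^ ((n:ℝ)*(p-1))) * g n x
          ≤ (if n ≤ N then ENNReal.ofReal ((2:ℝ) ^ ((n:ℝ)*(p-1))) * (‖f x‖₊:ℝ≥0∞) else 0) := by
        intro n
        by_cases hc : τ (n-1) < (‖f x‖₊:ℝ≥0∞)
        · have hgn : g n x = (‖f x‖₊:ℝ≥0∞) := by rw [hgdef]; simp only [if_pos hc]
          have hnN : n ≤ N := by
            by_contra hgt
            push_neg at hgt
            have heq : τ (n-1) = ENNReal.ofReal ((2:ℝ) ^ ((n:ℝ)-1)) := by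
              rw [hτdef]
              simp only []
              congr 1
              congr 1
              push_cast
              ring
            have hlt : (2:ℝ) ^ ((n:ℝ)-1) < s := by
              rw [heq] at hc
              exact (ENNReal.ofReal_lt_iff_lt_toReal (by positivity) hFtop).1 hc
            have hmono : (2:ℝ) ^ ((N:ℝ)) ≤ (2:ℝ) ^ ((n:ℝ)-1) := by
              apply Real.rpow_le_rpow_of_exponent_le one_le_two
              have h5 : (N:ℝ) + 1 ≤ (n:ℝ) := by
                exact_mod_cast Int.lt_iff_add_one_le.1 hgt
              linarith
            linarith
          rw [hgn, if_pos hnN]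
        · have hgn : g n x = 0 := by rw [hgdef]; simp only [if_neg hc]
          rw [hgn, mul_zero]
          exact zero_le
      refine le_trans (Summable.tsum_le_tsum hterm ENNReal.summable ENNReal.summable) ?_
      set h : ℤ → ℝ≥0∞ := fun n =>
        if n ≤ N then ENNReal.ofReal ((2:ℝ) ^ ((n:ℝ)*(p-1))) * (‖f x‖₊:ℝ≥0∞) else 0 with hhdef
      have hinj : Function.Injective (fun k : ℕ => N - (k:ℤ)) := by
        intro k k' hkk
        simp only [] at hkk
        omega
      have hsupp : Function.support h ⊆ Set.range (fun k : ℕ => N - (k:ℤ)) := by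
        intro z hz
        rw [Function.mem_support] at hz
        by_cases hzN : z ≤ N
        · exact ⟨(N - z).toNat, by
            simp only []
            rw [Int.toNat_of_nonneg (sub_nonneg.2 hzN)]
            ring⟩
        · exfalso
          apply hz
          rw [hhdef]
          simp only [if_neg hzN]
      rw [← hinj.tsum_eq hsupp]
      have hval : ∀ k : ℕ, h (N - (k:ℤ))
          = (ENNReal.ofReal ((2:ℝ) ^ ((N:ℝ)*(p-1))) * (‖f x‖₊:ℝ≥0∞)) * r ^ k := by
        intro k
        rw [hhdef]
        simp only []
        rw [if_pos (by omega : N - (k:ℤ) ≤ N)]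
        have hre : (2:ℝ) ^ ((((N - (k:ℤ)):ℤ):ℝ) * (p-1))
            = (2:ℝ) ^ ((N:ℝ)*(p-1)) * ((2:ℝ) ^ (-(p-1))) ^ k := by
          rw [← Real.rpow_natCast ((2:ℝ) ^ (-(p-1))) k,
            ← Real.rpow_mul (by norm_num : (0:ℝ) ≤ 2),
            ← Real.rpow_add two_pos]
          congr 1
          push_cast
          ring
        rw [hre, ENNReal.ofReal_mul (by positivity), ENNReal.ofReal_pow (by positivity),
          hrdef]
        ring
      rw [tsum_congr hval, ENNReal.tsum_mul_left, ENNReal.tsum_geometric]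
      have hc0 : ENNReal.ofReal ((2:ℝ) ^ ((N:ℝ)*(p-1)))
          ≤ ENNReal.ofReal ((2:ℝ)^(p-1)) * (‖f x‖₊:ℝ≥0∞) ^ (p-1) := by
        have h2N : (2:ℝ) ^ ((N:ℝ)) ≤ 2 * s := by
          have he : (2:ℝ) ^ ((N:ℝ)) = 2 * (2:ℝ) ^ ((N:ℝ)-1) := by
            rw [show (N:ℝ) = ((N:ℝ)-1)+1 by ring, Real.rpow_add two_pos, Real.rpow_one]
            ring
          rw [he]
          linarith
        have hr1 : (2:ℝ) ^ ((N:ℝ)*(p-1)) ≤ ((2:ℝ) * s) ^ (p-1) := by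
          rw [Real.rpow_mul (by norm_num : (0:ℝ) ≤ 2)]
          exact Real.rpow_le_rpow (by positivity) h2N hp1.le
        have hsp : ((2:ℝ) * s) ^ (p-1) = (2:ℝ)^(p-1) * s^(p-1) :=
          Real.mul_rpow (by norm_num) hs0.le
        calc ENNReal.ofReal ((2:ℝ) ^ ((N:ℝ)*(p-1)))
            ≤ ENNReal.ofReal ((2:ℝ)^(p-1) * s^(p-1)) :=
              ENNReal.ofReal_le_ofReal (by rw [← hsp]; exact hr1)
          _ = ENNReal.ofReal ((2:ℝ)^(p-1)) * ENNReal.ofReal (s^(p-1)) :=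
              ENNReal.ofReal_mul (by positivity)
          _ = ENNReal.ofReal ((2:ℝ)^(p-1)) * (‖f x‖₊:ℝ≥0∞) ^ (p-1) := by
              rw [← ENNReal.ofReal_rpow_of_nonneg hs0.le hp1.le, hsdef,
                ENNReal.ofReal_toReal hFtop]
      have hpow : (‖f x‖₊:ℝ≥0∞) ^ (p-1) * (‖f x‖₊:ℝ≥0∞) = (‖f x‖₊:ℝ≥0∞) ^ p := by
        nth_rewrite 2 [← ENNReal.rpow_one ((‖f x‖₊:ℝ≥0∞))]
        rw [← ENNReal.rpow_add _ _ hF0 hFtop]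
        norm_num
      calc (ENNReal.ofReal ((2:ℝ) ^ ((N:ℝ)*(p-1))) * (‖f x‖₊:ℝ≥0∞)) * (1 - r)⁻¹
          ≤ ((ENNReal.ofReal ((2:ℝ)^(p-1)) * (‖f x‖₊:ℝ≥0∞) ^ (p-1)) * (‖f x‖₊:ℝ≥0∞))
              * (1 - r)⁻¹ := by
            exact mul_le_mul_left (mul_le_mul_left hc0 _) _
        _ = (ENNReal.ofReal ((2:ℝ)^(p-1)) * (1 - r)⁻¹)
              * ((‖f x‖₊:ℝ≥0∞) ^ (p-1) * (‖f x‖₊:ℝ≥0∞)) := by ring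
        _ = (ENNReal.ofReal ((2:ℝ)^(p-1)) * (1 - r)⁻¹) * (‖f x‖₊:ℝ≥0∞) ^ p := by rw [hpow]
  -- snorm identity
  have hpne0 : (ENNReal.ofReal p) ≠ 0 := (ENNReal.ofReal_pos.2 hp0).ne'
  have hsnorm : eLpNorm f (ENNReal.ofReal p) μ ^ p = ∫⁻ x, (‖f x‖₊:ℝ≥0∞) ^ p ∂μ := by
    rw [eLpNorm_eq_lintegral_rpow_enorm_toReal hpne0 ENNReal.ofReal_ne_top,
      ENNReal.toReal_ofReal hp0.le, ← ENNReal.rpow_mul, one_div,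
      inv_mul_cancel₀ hp0.ne', ENNReal.rpow_one]
    rfl
  -- constants
  set Cp : ℝ≥0∞ := ENNReal.ofReal ((2:ℝ)^(p-1)) * (1 - r)⁻¹ with hCpdef
  have hCptop : Cp ≠ ∞ :=
    ENNReal.mul_ne_top ENNReal.ofReal_ne_top (ENNReal.inv_ne_top.2 h1r.ne')
  have hconst : ENNReal.ofReal ((2:ℝ) ^ (p+1)) * Cp
      = ENNReal.ofReal ((2:ℝ) ^ (p+1) * ((2:ℝ) ^ (p-1) * ((1:ℝ) - (2:ℝ) ^ (-(p-1)))⁻¹)) := by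
    have h1 : (1:ℝ≥0∞) - r = ENNReal.ofReal ((1:ℝ) - (2:ℝ)^(-(p-1))) := by
      rw [hrdef, ← ENNReal.ofReal_one, ← ENNReal.ofReal_sub _ (by positivity)]
    rw [hCpdef, h1, ← ENNReal.ofReal_inv_of_pos hu0, ← ENNReal.ofReal_mul (by positivity),
      ← ENNReal.ofReal_mul (by positivity)]
  -- main chain
  calc (∑' Q : ℤ × (Fin d → ℤ),
        ENNReal.ofReal (|mQ μ (dyadicCube d Q) f| ^ p) * (a Q : ℝ≥0∞))
      ≤ ∑' Q : ℤ × (Fin d → ℤ), ∑' n : ℤ, w n Q :=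
        Summable.tsum_le_tsum step1 ENNReal.summable ENNReal.summable
    _ = ∑' n : ℤ, ∑' Q : ℤ × (Fin d → ℤ), w n Q := ENNReal.tsum_comm
    _ ≤ ∑' n : ℤ, (c₃:ℝ≥0∞) * ((τ (n+1) ^ p * (τ (n-1))⁻¹) * ∫⁻ x, g n x ∂μ) :=
        Summable.tsum_le_tsum step3 ENNReal.summable ENNReal.summable
    _ = ∑' n : ℤ, ((c₃:ℝ≥0∞) * ENNReal.ofReal ((2:ℝ) ^ (p+1)))
          * (ENNReal.ofReal ((2:ℝ) ^ ((n:ℝ)*(p-1))) * ∫⁻ x, g n x ∂μ) := by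
        refine tsum_congr fun n => ?_
        rw [hexp n]
        ring
    _ = ((c₃:ℝ≥0∞) * ENNReal.ofReal ((2:ℝ) ^ (p+1)))
          * ∑' n : ℤ, (ENNReal.ofReal ((2:ℝ) ^ ((n:ℝ)*(p-1))) * ∫⁻ x, g n x ∂μ) :=
        ENNReal.tsum_mul_left
    _ = ((c₃:ℝ≥0∞) * ENNReal.ofReal ((2:ℝ) ^ (p+1)))
          * ∑' n : ℤ, ∫⁻ x, ENNReal.ofReal ((2:ℝ) ^ ((n:ℝ)*(p-1))) * g n x ∂μ := by
        refine congrArg _ (tsum_congr fun n => ?_)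
        rw [lintegral_const_mul' _ _ ENNReal.ofReal_ne_top]
    _ = ((c₃:ℝ≥0∞) * ENNReal.ofReal ((2:ℝ) ^ (p+1)))
          * ∫⁻ x, ∑' n : ℤ, ENNReal.ofReal ((2:ℝ) ^ ((n:ℝ)*(p-1))) * g n x ∂μ := by
        rw [lintegral_tsum (fun n => ((hgmeas n).const_mul _))]
    _ ≤ ((c₃:ℝ≥0∞) * ENNReal.ofReal ((2:ℝ) ^ (p+1)))
          * ∫⁻ x, Cp * (‖f x‖₊:ℝ≥0∞) ^ p ∂μ :=
        mul_le_mul_right (lintegral_mono hpoint) _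
    _ = ((c₃:ℝ≥0∞) * ENNReal.ofReal ((2:ℝ) ^ (p+1)))
          * (Cp * ∫⁻ x, (‖f x‖₊:ℝ≥0∞) ^ p ∂μ) := by
        rw [lintegral_const_mul' _ _ hCptop]
    _ = (ENNReal.ofReal ((2:ℝ) ^ (p+1)) * Cp) * (c₃:ℝ≥0∞)
          * ∫⁻ x, (‖f x‖₊:ℝ≥0∞) ^ p ∂μ := by ring
    _ = ENNReal.ofReal ((2:ℝ) ^ (p+1) * ((2:ℝ) ^ (p-1) * ((1:ℝ) - (2:ℝ) ^ (-(p-1)))⁻¹))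
          * (c₃:ℝ≥0∞) * eLpNorm f (ENNReal.ofReal p) μ ^ p := by
        rw [hconst, hsnorm]



end
end

section
/- Let μ be a Radon measure on ℝ^d with polynomial growth of degree n, i.e. μ(B(x,R)) ≤ C₀R^n for all x ∈ ℝ^d and R > 0, and let K : ℝ^d \ {0} → ℝ satisfy |∂_{x_i}K(x)| ≤ C_K|x|^{−n−1} for all x ≠ 0 and 1 ≤ i ≤ d. Let ν be a finite real Radon measure supported in a ball B(z,r) with total mass ν(ℝ^d) = 0. Then ∫_{ℝ^d \ B(z,2r)} |∫ K(x−y) dν(y)| dμ(x) ≤ C‖ν‖, where C depends only on n, d, C₀ and C_K, and ‖ν‖ is the total variation of ν. -/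
open MeasureTheory Set ENNReal

noncomputable section

private lemma exists_ann {s : ℝ} (hs : 1 < s) :
    ∃ j : ℕ, (2 : ℝ) ^ j < s ∧ s ≤ 2 ^ (j + 1) := by
  classical
  have h : ∃ m : ℕ, s ≤ 2 ^ (m + 1) := by
    obtain ⟨m, hm⟩ := pow_unbounded_of_one_lt s (by norm_num : (1:ℝ) < 2)
    exact ⟨m, hm.le.trans (pow_le_pow_right₀ (by norm_num) (Nat.le_succ m))⟩
  refine ⟨Nat.find h, ?_, Nat.find_spec h⟩
  rcases Nat.eq_zero_or_pos (Nat.find h) with h0 | h0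
  · simpa [h0] using hs
  · have hmin := Nat.find_min h (m := Nat.find h - 1) (by omega)
    push_neg at hmin
    calc (2:ℝ) ^ Nat.find h = 2 ^ (Nat.find h - 1 + 1) := by congr 1; omega
    _ < s := hmin

/-- If `μ` has `n`-polynomial growth, `K` has a gradient bound
`|∇K(x)| ≤ C_K |x|^{-n-1}`, and `ν` is a finite real Radon measure supported in `B(z,r)`
with `ν(ℝ^d) = 0`, then `∫_{ℝ^d ∖ B(z,2r)} |∫ K(x-y) dν(y)| dμ(x) ≤ C ‖ν‖`. -/
theorem statement13 (n d : ℕ) (hn : 1 ≤ n) (hnd : n < d) (C₀ CK : ℝ)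
    (hC₀ : 0 < C₀) (hCK : 0 < CK) :
    ∃ C : ℝ, 0 < C ∧
      ∀ (μ : Measure (EuclideanSpace ℝ (Fin d))),
        (∀ (x : EuclideanSpace ℝ (Fin d)) (R : ℝ), 0 < R →
          μ (Metric.closedBall x R) ≤ ENNReal.ofReal (C₀ * R ^ n)) →
      ∀ K : EuclideanSpace ℝ (Fin d) → ℝ,
        (∀ x : EuclideanSpace ℝ (Fin d), x ≠ 0 → DifferentiableAt ℝ K x) →
        (∀ x : EuclideanSpace ℝ (Fin d), x ≠ 0 → ‖fderiv ℝ K x‖ ≤ CK / ‖x‖ ^ (n + 1)) →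
      ∀ (ν : SignedMeasure (EuclideanSpace ℝ (Fin d))) (z : EuclideanSpace ℝ (Fin d)) (r : ℝ),
        0 < r →
        ν.totalVariation (Metric.closedBall z r)ᶜ = 0 →
        ν Set.univ = 0 →
        (∫⁻ x in (Metric.closedBall z (2 * r))ᶜ, ENNReal.ofReal |Tfull K ν x| ∂μ)
          ≤ ENNReal.ofReal (C * (ν.totalVariation Set.univ).toReal) := by
  refine ⟨CK * C₀ * 2 ^ (2 * n + 1), by positivity, ?_⟩
  intro μ hμ K hKdiff hKgrad ν z r hr hsupp hzero
  set ν₁ := ν.toJordanDecomposition.posPart with hν₁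
  set ν₂ := ν.toJordanDecomposition.negPart with hν₂
  set T := (ν.totalVariation Set.univ).toReal with hT
  have hT0 : 0 ≤ T := ENNReal.toReal_nonneg
  have hS : MeasurableSet (Metric.closedBall z r) := measurableSet_closedBall
  have hc12 : ν₁ (Metric.closedBall z r)ᶜ = 0 ∧ ν₂ (Metric.closedBall z r)ᶜ = 0 := by
    have h := hsupp
    rw [SignedMeasure.totalVariation, Measure.add_apply] at h
    exact ⟨by simpa using (add_eq_zero.1 h).1, by simpa using (add_eq_zero.1 h).2⟩
  have hae1 : ∀ᵐ y ∂ν₁, y ∈ Metric.closedBall z r := by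
    rw [ae_iff]; exact hc12.1
  have hae2 : ∀ᵐ y ∂ν₂, y ∈ Metric.closedBall z r := by
    rw [ae_iff]; exact hc12.2
  have hmass : (ν₁ Set.univ).toReal = (ν₂ Set.univ).toReal := by
    have h2 : ν Set.univ = (ν₁ Set.univ).toReal - (ν₂ Set.univ).toReal := by
      conv_lhs => rw [← ν.toSignedMeasure_toJordanDecomposition]
      exact Measure.toSignedMeasure_sub_apply MeasurableSet.univ
    rw [hzero] at h2; linarith
  have hTsum : T = (ν₁ Set.univ).toReal + (ν₂ Set.univ).toReal := by
    rw [hT, SignedMeasure.totalVariation, Measure.add_apply,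
      ENNReal.toReal_add (measure_ne_top _ _) (measure_ne_top _ _)]
  -- pointwise bound outside the double ball
  have key : ∀ x, x ∉ Metric.closedBall z (2 * r) →
      |Tfull K ν x| ≤ CK * 2 ^ (n + 1) * r / dist x z ^ (n + 1) * T := by
    intro x hx
    have hD : 2 * r < dist x z := by
      simpa [Metric.mem_closedBall, not_le] using hx
    set D := dist x z with hDdef
    have hD0 : 0 < D := by linarith
    set M := CK * 2 ^ (n + 1) * r / D ^ (n + 1) with hM
    have hM0 : 0 ≤ M := by positivity
    have hball : ∀ y ∈ Metric.closedBall z r, |K (x - y) - K (x - z)| ≤ M := by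
      intro y hy
      have hyz : dist y z ≤ r := Metric.mem_closedBall.1 hy
      set s := segment ℝ (x - z) (x - y) with hsdef
      have hseg : ∀ w ∈ s, D / 2 ≤ ‖w‖ := by
        intro w hw
        rw [hsdef, segment_eq_image] at hw
        obtain ⟨t, ⟨ht0, ht1⟩, rfl⟩ := hw
        have hrepr : (1 - t) • (x - z) + t • (x - y) = x - ((1 - t) • z + t • y) := by
          module
        show D / 2 ≤ ‖(1 - t) • (x - z) + t • (x - y)‖
        rw [hrepr, ← dist_eq_norm]
        have huz : dist ((1 - t) • z + t • y) z ≤ r := by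
          have : (1 - t) • z + t • y - z = t • (y - z) := by module
          rw [dist_eq_norm, this, norm_smul]
          calc ‖t‖ * ‖y - z‖ ≤ 1 * r := by
                apply mul_le_mul _ _ (norm_nonneg _) zero_le_one
                · rw [Real.norm_eq_abs, abs_of_nonneg ht0]; exact ht1
                · rw [← dist_eq_norm]; exact hyz
          _ = r := one_mul r
        have := dist_triangle x ((1 - t) • z + t • y) z
        have hr2 : r < D / 2 := by linarith
        calc D / 2 ≤ D - r := by linarith
        _ ≤ dist x ((1 - t) • z + t • y) := by
            have := dist_triangle x ((1 - t) • z + t • y) z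
            rw [hDdef]; linarith
      have hne : ∀ w ∈ s, w ≠ 0 := by
        intro w hw h0
        have := hseg w hw
        rw [h0, norm_zero] at this
        linarith
      have hbound : ∀ w ∈ s, ‖fderiv ℝ K w‖ ≤ CK * 2 ^ (n + 1) / D ^ (n + 1) := by
        intro w hw
        refine (hKgrad w (hne w hw)).trans ?_
        have hw2 : D / 2 ≤ ‖w‖ := hseg w hw
        have hwpos : 0 < ‖w‖ := lt_of_lt_of_le (by linarith) hw2
        have hpow : (D / 2) ^ (n + 1) ≤ ‖w‖ ^ (n + 1) := by
          apply pow_le_pow_left₀ (by linarith) hw2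
        calc CK / ‖w‖ ^ (n + 1) ≤ CK / (D / 2) ^ (n + 1) := by
              apply div_le_div_of_nonneg_left hCK.le (by positivity) hpow
        _ = CK * 2 ^ (n + 1) / D ^ (n + 1) := by
              rw [div_pow]; field_simp
      have hmvt := Convex.norm_image_sub_le_of_norm_hasFDerivWithin_le
        (f := K) (f' := fun w => fderiv ℝ K w) (s := s)
        (fun w hw => ((hKdiff w (hne w hw)).hasFDerivAt).hasFDerivWithinAt)
        hbound (convex_segment _ _) (left_mem_segment ℝ _ _) (right_mem_segment ℝ _ _)
      have hdist : ‖(x - y) - (x - z)‖ ≤ r := by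
        have : (x - y) - (x - z) = z - y := by module
        rw [this, ← dist_eq_norm, dist_comm]
        exact hyz
      calc |K (x - y) - K (x - z)| = ‖K (x - y) - K (x - z)‖ := rfl
      _ ≤ CK * 2 ^ (n + 1) / D ^ (n + 1) * ‖(x - y) - (x - z)‖ := hmvt
      _ ≤ CK * 2 ^ (n + 1) / D ^ (n + 1) * r := by
          apply mul_le_mul_of_nonneg_left hdist (by positivity)
      _ = M := by rw [hM]; ring
    -- integrability
    have hxy : ∀ y ∈ Metric.closedBall z r, x - y ≠ 0 := by
      intro y hy h0
      have hyz : dist y z ≤ r := Metric.mem_closedBall.1 hy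
      have : dist x y = 0 := by rw [dist_eq_norm, h0, norm_zero]
      have htri := dist_triangle x y z
      rw [this] at htri
      simp only [zero_add] at htri
      rw [hDdef] at hD
      have := dist_comm y z ▸ hyz
      linarith [htri.trans hyz]
    have hcont : ContinuousOn (fun y => K (x - y)) (Metric.closedBall z r) := by
      intro y hy
      exact (((hKdiff _ (hxy y hy)).continuousAt).comp
        ((continuous_const.sub continuous_id).continuousAt)).continuousWithinAt
    have haesm : ∀ (m : Measure (EuclideanSpace ℝ (Fin d))),
        m (Metric.closedBall z r)ᶜ = 0 →
        AEStronglyMeasurable (fun y => K (x - y)) m := by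
      intro m hm
      have hrest : m.restrict (Metric.closedBall z r) = m :=
        Measure.restrict_eq_self_of_ae_mem (by rw [ae_iff]; exact hm)
      have := hcont.aestronglyMeasurable (μ := m) hS
      rwa [hrest] at this
    set f := fun y => K (x - y) - K (x - z) with hf
    have habs : ∀ y ∈ Metric.closedBall z r, ‖K (x - y)‖ ≤ M + |K (x - z)| := by
      intro y hy
      have h1 := hball y hy
      calc ‖K (x - y)‖ = |K (x - y)| := rfl
      _ ≤ |K (x - y) - K (x - z)| + |K (x - z)| := by
          have := abs_sub_abs_le_abs_sub (K (x - y)) (K (x - z))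
          linarith [abs_sub_abs_le_abs_sub (K (x - y)) (K (x - z)),
            abs_nonneg (K (x - y) - K (x - z))]
      _ ≤ M + |K (x - z)| := by linarith
    have hint1 : Integrable (fun y => K (x - y)) ν₁ :=
      ⟨haesm ν₁ hc12.1, HasFiniteIntegral.of_bounded
        (hae1.mono fun y hy => habs y hy)⟩
    have hint2 : Integrable (fun y => K (x - y)) ν₂ :=
      ⟨haesm ν₂ hc12.2, HasFiniteIntegral.of_bounded
        (hae2.mono fun y hy => habs y hy)⟩
    have hf1 : Integrable f ν₁ := hint1.sub (integrable_const _)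
    have hf2 : Integrable f ν₂ := hint2.sub (integrable_const _)
    have e1 : ∫ y, K (x - y) ∂ν₁ = (∫ y, f y ∂ν₁) + (ν₁ Set.univ).toReal * K (x - z) := by
      have heq : (fun y => K (x - y)) = fun y => f y + K (x - z) := by
        funext y; simp [hf]
      rw [heq, integral_add hf1 (integrable_const _), integral_const, smul_eq_mul]
      rfl
    have e2 : ∫ y, K (x - y) ∂ν₂ = (∫ y, f y ∂ν₂) + (ν₂ Set.univ).toReal * K (x - z) := by
      have heq : (fun y => K (x - y)) = fun y => f y + K (x - z) := by
        funext y; simp [hf]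
      rw [heq, integral_add hf2 (integrable_const _), integral_const, smul_eq_mul]
      rfl
    have hTfull : Tfull K ν x = (∫ y, f y ∂ν₁) - ∫ y, f y ∂ν₂ := by
      rw [Tfull, ← hν₁, ← hν₂, e1, e2, hmass]; ring
    have hb1 : ‖∫ y, f y ∂ν₁‖ ≤ M * (ν₁ Set.univ).toReal :=
      norm_integral_le_of_norm_le_const (hae1.mono fun y hy => hball y hy)
    have hb2 : ‖∫ y, f y ∂ν₂‖ ≤ M * (ν₂ Set.univ).toReal :=
      norm_integral_le_of_norm_le_const (hae2.mono fun y hy => hball y hy)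
    calc |Tfull K ν x| ≤ ‖∫ y, f y ∂ν₁‖ + ‖∫ y, f y ∂ν₂‖ := by
          rw [hTfull]; exact abs_sub _ _
    _ ≤ M * (ν₁ Set.univ).toReal + M * (ν₂ Set.univ).toReal := add_le_add hb1 hb2
    _ = M * T := by rw [hTsum]; ring
    _ = CK * 2 ^ (n + 1) * r / D ^ (n + 1) * T := by rw [hM]
  -- the integral estimate via annuli
  set c := CK * 2 ^ (n + 1) * r * T with hc
  have hc0 : 0 ≤ c := by positivity
  set g : EuclideanSpace ℝ (Fin d) → ℝ≥0∞ :=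
    fun x => ENNReal.ofReal (c / dist x z ^ (n + 1)) with hg
  have step1 : (∫⁻ x in (Metric.closedBall z (2 * r))ᶜ, ENNReal.ofReal |Tfull K ν x| ∂μ)
      ≤ ∫⁻ x in (Metric.closedBall z (2 * r))ᶜ, g x ∂μ := by
    apply lintegral_mono_ae
    rw [ae_restrict_iff' measurableSet_closedBall.compl]
    refine ae_of_all _ fun x hx => ?_
    apply ENNReal.ofReal_le_ofReal
    calc |Tfull K ν x| ≤ CK * 2 ^ (n + 1) * r / dist x z ^ (n + 1) * T := key x hx
    _ = c / dist x z ^ (n + 1) := by rw [hc]; ring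
  set A : ℕ → Set (EuclideanSpace ℝ (Fin d)) :=
    fun j => Metric.closedBall z (2 ^ (j + 1) * (2 * r)) \
      Metric.closedBall z (2 ^ j * (2 * r)) with hA
  have hcover : (Metric.closedBall z (2 * r))ᶜ ⊆ ⋃ j, A j := by
    intro x hx
    have hD : 2 * r < dist x z := by
      simpa [Metric.mem_closedBall, not_le] using hx
    have hs1 : 1 < dist x z / (2 * r) := (one_lt_div (by linarith)).2 hD
    obtain ⟨j, hj1, hj2⟩ := exists_ann hs1
    refine Set.mem_iUnion.2 ⟨j, ?_, ?_⟩
    · rw [Metric.mem_closedBall]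
      rw [div_le_iff₀ (by linarith : (0:ℝ) < 2 * r)] at hj2
      linarith
    · rw [Metric.mem_closedBall, not_le]
      rw [lt_div_iff₀ (by linarith : (0:ℝ) < 2 * r)] at hj1
      linarith
  have hAj : ∀ j : ℕ, (∫⁻ x in A j, g x ∂μ)
      ≤ ENNReal.ofReal (c * C₀ * 2 ^ n / (2 * r)) * (2⁻¹ : ℝ≥0∞) ^ j := by
    intro j
    have hbase : (0:ℝ) < 2 ^ j * (2 * r) := by positivity
    have hb : ∀ x ∈ A j, g x ≤ ENNReal.ofReal (c / (2 ^ j * (2 * r)) ^ (n + 1)) := by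
      intro x hx
      have h1 : 2 ^ j * (2 * r) < dist x z := by
        have := hx.2
        rw [Metric.mem_closedBall, not_le] at this
        exact this
      apply ENNReal.ofReal_le_ofReal
      apply div_le_div_of_nonneg_left hc0 (by positivity)
      exact pow_le_pow_left₀ hbase.le h1.le _
    have hAmeas : MeasurableSet (A j) :=
      measurableSet_closedBall.diff measurableSet_closedBall
    calc (∫⁻ x in A j, g x ∂μ)
        ≤ ∫⁻ _ in A j, ENNReal.ofReal (c / (2 ^ j * (2 * r)) ^ (n + 1)) ∂μ := by
          apply lintegral_mono_ae
          rw [ae_restrict_iff' hAmeas]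
          exact ae_of_all _ hb
    _ = ENNReal.ofReal (c / (2 ^ j * (2 * r)) ^ (n + 1)) * μ (A j) :=
          setLIntegral_const _ _
    _ ≤ ENNReal.ofReal (c / (2 ^ j * (2 * r)) ^ (n + 1))
          * ENNReal.ofReal (C₀ * (2 ^ (j + 1) * (2 * r)) ^ n) := by
          gcongr
          exact (measure_mono Set.diff_subset).trans (hμ z _ (by positivity))
    _ = ENNReal.ofReal (c / (2 ^ j * (2 * r)) ^ (n + 1) * (C₀ * (2 ^ (j + 1) * (2 * r)) ^ n)) := by
          rw [← ENNReal.ofReal_mul (by positivity)]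
    _ = ENNReal.ofReal (c * C₀ * 2 ^ n / (2 * r) * (2⁻¹) ^ j) := by
          congr 1
          have h2j : ((2:ℝ) ^ j) ≠ 0 := by positivity
          have hrne : (2 * r) ≠ 0 := by positivity
          rw [inv_pow]
          field_simp
          ring_nf
          rw [show (4:ℝ) ^ n = 2 ^ (n * 2) by rw [pow_mul, sq, ← mul_pow]; norm_num]
    _ = ENNReal.ofReal (c * C₀ * 2 ^ n / (2 * r)) * (2⁻¹ : ℝ≥0∞) ^ j := by
          rw [ENNReal.ofReal_mul (by positivity), ENNReal.ofReal_pow (by norm_num)]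
          congr 2
          rw [ENNReal.ofReal_inv_of_pos (by norm_num)]
          norm_num
  have hsum : (∑' j : ℕ, ENNReal.ofReal (c * C₀ * 2 ^ n / (2 * r)) * (2⁻¹ : ℝ≥0∞) ^ j)
      = ENNReal.ofReal (CK * C₀ * 2 ^ (2 * n + 1) * T) := by
    rw [ENNReal.tsum_mul_left, ENNReal.tsum_geometric, ENNReal.one_sub_inv_two, inv_inv]
    rw [show ((2:ℝ≥0∞)) = ENNReal.ofReal 2 by norm_num,
      ← ENNReal.ofReal_mul (by positivity)]
    congr 1
    have hrne : r ≠ 0 := hr.ne'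
    rw [hc]
    field_simp
    ring
  calc (∫⁻ x in (Metric.closedBall z (2 * r))ᶜ, ENNReal.ofReal |Tfull K ν x| ∂μ)
      ≤ ∫⁻ x in (Metric.closedBall z (2 * r))ᶜ, g x ∂μ := step1
  _ ≤ ∫⁻ x in ⋃ j, A j, g x ∂μ := lintegral_mono_set hcover
  _ ≤ ∑' j : ℕ, ∫⁻ x in A j, g x ∂μ := lintegral_iUnion_le A g
  _ ≤ ∑' j : ℕ, ENNReal.ofReal (c * C₀ * 2 ^ n / (2 * r)) * (2⁻¹ : ℝ≥0∞) ^ j :=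
      ENNReal.tsum_le_tsum hAj
  _ = ENNReal.ofReal (CK * C₀ * 2 ^ (2 * n + 1) * T) := hsum

end
end

section
/- Let K : ℝ^d \ {0} → ℝ satisfy |K(x)| ≤ C_K|x|^{−n} for all x ≠ 0 and let ρ ≥ 1. There is a constant C, depending only on n, d and C_K, such that for every 0 < N₀ < N, every finite real Radon measure ν on ℝ^d with supp ν ∩ B(0,N) = ∅, and every x ∈ ℝ^d with |x| ≤ N₀, one has (V^S_ρ∘T)ν(x) ≤ C (N−N₀)^{−n} ‖ν‖. -/
open MeasureTheory Set ENNReal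

noncomputable section

lemma Ik_unique {x : ℝ} {j k : ℤ} (hj : x ∈ Ik j) (hk : x ∈ Ik k) : j = k := by
  by_contra hne
  rcases lt_or_gt_of_ne hne with h | h
  · have h1 : (2:ℝ) ^ (-k) ≤ 2 ^ (-j-1) := by
      apply zpow_le_zpow_right₀ one_le_two; omega
    exact absurd (hk.2.trans_le (h1.trans hj.1)) (lt_irrefl x)
  · have h1 : (2:ℝ) ^ (-j) ≤ 2 ^ (-k-1) := by
      apply zpow_le_zpow_right₀ one_le_two; omega
    exact absurd (hj.2.trans_le (h1.trans hk.1)) (lt_irrefl x)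

lemma tsum_rpow_le {ι : Type*} {a : ι → ℝ≥0∞} {S : ℝ≥0∞} (hS : S ≠ ⊤)
    (h : ∑' m, a m ≤ S) {ρ : ℝ} (hρ : 1 ≤ ρ) :
    ∑' m, a m ^ ρ ≤ S ^ ρ := by
  have hρ0 : (0:ℝ) < ρ := by linarith
  by_cases hS0 : S = 0
  · subst hS0
    have h0 : ∀ m, a m = 0 := fun m =>
      le_antisymm (le_trans (ENNReal.le_tsum m) h) zero_le
    simp [h0, ENNReal.zero_rpow_of_pos hρ0]
  · have key : ∀ m, a m ^ ρ ≤ a m * S ^ (ρ - 1) := by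
      intro m
      by_cases ha : a m = 0
      · simp [ha, ENNReal.zero_rpow_of_pos hρ0]
      · have haS : a m ≤ S := le_trans (ENNReal.le_tsum m) h
        have haT : a m ≠ ⊤ := fun ht => hS (top_le_iff.mp (ht ▸ haS))
        have he : (1:ℝ) + (ρ - 1) = ρ := by ring
        calc a m ^ ρ = a m ^ ((1:ℝ) + (ρ - 1)) := by rw [he]
          _ = a m ^ (1:ℝ) * a m ^ (ρ - 1) := ENNReal.rpow_add _ _ ha haT
          _ ≤ a m * S ^ (ρ - 1) := by
              rw [ENNReal.rpow_one]
              exact mul_le_mul_right (ENNReal.rpow_le_rpow haS (by linarith)) _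
    calc ∑' m, a m ^ ρ ≤ ∑' m, a m * S ^ (ρ-1) := ENNReal.tsum_le_tsum key
      _ = (∑' m, a m) * S ^ (ρ-1) := ENNReal.tsum_mul_right
      _ ≤ S * S ^ (ρ-1) := mul_le_mul_left h _
      _ = S ^ (1:ℝ) * S ^ (ρ-1) := by rw [ENNReal.rpow_one]
      _ = S ^ ((1:ℝ) + (ρ-1)) := (ENNReal.rpow_add _ _ hS0 hS).symm
      _ = S ^ ρ := by norm_num

lemma key_sum {E : Type*} [MeasurableSpace E] [PseudoMetricSpace E] [OpensMeasurableSpace E]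
    (μ : Measure E) [IsFiniteMeasure μ] (f : E → ℝ) {B : ℝ} (hB : 0 ≤ B)
    (hf : ∀ᵐ y ∂μ, |f y| ≤ B) (x : E) (ε : ℤ → ℝ) (hε : Antitone ε) :
    ∑' m : ℤ, ENNReal.ofReal
        |(∫ y in {y | ε m < dist x y}, f y ∂μ) - ∫ y in {y | ε (m+1) < dist x y}, f y ∂μ|
      ≤ 2 * (ENNReal.ofReal B * μ Set.univ) := by
  classical
  set S : ℤ → Set E := fun m => {y | ε m < dist x y} with hS
  have hSmeas : ∀ m, MeasurableSet (S m) := fun m =>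
    (isOpen_lt continuous_const (continuous_const.dist continuous_id)).measurableSet
  set G : ℤ → ℝ := fun m => ∫ y in S m, f y ∂μ with hG
  have hSmono : ∀ {m m' : ℤ}, m ≤ m' → S m ⊆ S m' := by
    intro m m' h y hy
    exact lt_of_le_of_lt (hε h) hy
  have habs : ∀ s : Set E, |∫ y in s, f y ∂μ| ≤ B * (μ s).toReal := by
    intro s
    have h1 : ∀ᵐ y ∂μ.restrict s, ‖f y‖ ≤ B :=
      ae_restrict_of_ae (hf.mono fun y hy => by rwa [Real.norm_eq_abs])
    have := norm_integral_le_of_norm_le_const h1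
    rwa [Real.norm_eq_abs, measureReal_restrict_apply_univ] at this
  have hofReal : ∀ s : Set E, ENNReal.ofReal |∫ y in s, f y ∂μ| ≤ ENNReal.ofReal B * μ s := by
    intro s
    refine le_trans (ENNReal.ofReal_le_ofReal (habs s)) ?_
    rw [ENNReal.ofReal_mul hB, ENNReal.ofReal_toReal (measure_ne_top μ s)]
  have hterm : ∀ s : Set E, ENNReal.ofReal |∫ y in s, f y ∂μ| ≤ ENNReal.ofReal B * μ Set.univ :=
    fun s => le_trans (hofReal s) (mul_le_mul_right (measure_mono (Set.subset_univ s)) _)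
  rw [ENNReal.tsum_eq_iSup_sum]
  refine iSup_le fun F => ?_
  have hsplit := Finset.sum_filter_add_sum_filter_not F (fun m => IntegrableOn f (S (m+1)) μ)
      (fun m => ENNReal.ofReal |G m - G (m+1)|)
  have h1 : (∑ m ∈ F.filter (fun m => IntegrableOn f (S (m+1)) μ),
      ENNReal.ofReal |G m - G (m+1)|) ≤ ENNReal.ofReal B * μ Set.univ := by
    set A : ℤ → Set E := fun m => S (m+1) \ S m with hA
    have hineq : ∀ m ∈ F.filter (fun m => IntegrableOn f (S (m+1)) μ),
        ENNReal.ofReal |G m - G (m+1)| ≤ ENNReal.ofReal B * μ (A m) := by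
      intro m hm
      have hI : IntegrableOn f (S (m+1)) μ := (Finset.mem_filter.mp hm).2
      have hd : (∫ y in A m, f y ∂μ) = G (m+1) - G m :=
        integral_diff (hSmeas m) hI (hSmono (by omega))
      have heq : |G m - G (m+1)| = |∫ y in A m, f y ∂μ| := by rw [hd, abs_sub_comm]
      rw [heq]
      exact hofReal (A m)
    refine le_trans (Finset.sum_le_sum hineq) ?_
    rw [← Finset.mul_sum]
    refine mul_le_mul_right ?_ _
    have hdisj : ∀ m m' : ℤ, m < m' → Disjoint (A m) (A m') := by
      intro m m' h
      rw [Set.disjoint_left]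
      intro y hy hy'
      exact hy'.2 (hSmono (by omega) hy.1)
    rw [← measure_biUnion_finset ?_ (fun m _ => ((hSmeas (m+1)).diff (hSmeas m)))]
    · exact measure_mono (Set.subset_univ _)
    · intro m hm m' hm' hne
      rcases hne.lt_or_gt with h | h
      · exact hdisj m m' h
      · exact (hdisj m' m h).symm
  have h2 : (∑ m ∈ F.filter (fun m => ¬ IntegrableOn f (S (m+1)) μ),
      ENNReal.ofReal |G m - G (m+1)|) ≤ ENNReal.ofReal B * μ Set.univ := by
    set F₂ := F.filter (fun m => ¬ IntegrableOn f (S (m+1)) μ) with hF₂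
    have hni : ∀ m ∈ F₂, ¬ IntegrableOn f (S (m+1)) μ := fun m hm => (Finset.mem_filter.mp hm).2
    have hzero : ∀ m ∈ F₂, G (m+1) = 0 := fun m hm => integral_undef (hni m hm)
    by_cases hex : ∃ m₀ ∈ F₂, ENNReal.ofReal |G m₀ - G (m₀+1)| ≠ 0
    · obtain ⟨m₀, hm₀F, hm₀⟩ := hex
      have hG₀ : G m₀ ≠ 0 := by
        intro h0
        apply hm₀
        rw [hzero m₀ hm₀F, h0]
        simp
      have hInt₀ : IntegrableOn f (S m₀) μ := by
        by_contra hcon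
        exact hG₀ (integral_undef hcon)
      have huniq : ∀ m ∈ F₂, m ≠ m₀ → ENNReal.ofReal |G m - G (m+1)| = 0 := by
        intro m hm hne
        rcases hne.lt_or_gt with h | h
        · exact absurd (hInt₀.mono_set (hSmono (by omega))) (hni m hm)
        · have hm' : ¬ IntegrableOn f (S m) μ := by
            intro hI
            exact (hni m₀ hm₀F) (hI.mono_set (hSmono (by omega)))
          have h0 : G m = 0 := integral_undef hm'
          rw [h0, hzero m hm]
          simp
      rw [Finset.sum_eq_single_of_mem m₀ hm₀F huniq, hzero m₀ hm₀F, sub_zero]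
      exact hterm (S m₀)
    · push_neg at hex
      rw [Finset.sum_eq_zero hex]
      exact zero_le
  calc (∑ m ∈ F, ENNReal.ofReal |G m - G (m+1)|)
      = _ + _ := hsplit.symm
    _ ≤ ENNReal.ofReal B * μ Set.univ + ENNReal.ofReal B * μ Set.univ := add_le_add h1 h2
    _ = 2 * (ENNReal.ofReal B * μ Set.univ) := (two_mul _).symm

/-- For a kernel `K` with `|K(x)| ≤ C_K|x|^{-n}` and `ρ ≥ 1`, if `ν` is
a finite real Radon measure with `supp ν ∩ B(0,N) = ∅` and `|x| ≤ N₀ < N`, then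
`(V^S_ρ∘T)ν(x) ≤ C (N−N₀)^{−n} ‖ν‖` with `C` depending only on `n`, `d` and `C_K`. -/
theorem statement19 (n d : ℕ) (hn : 1 ≤ n) (hnd : n < d) (CK : ℝ) :
    ∃ C : ℝ, 0 < C ∧
      ∀ ρ : ℝ, 1 ≤ ρ →
      ∀ K : EuclideanSpace ℝ (Fin d) → ℝ,
        (∀ x : EuclideanSpace ℝ (Fin d), x ≠ 0 → |K x| ≤ CK / ‖x‖ ^ n) →
      ∀ N₀ N : ℝ, 0 < N₀ → N₀ < N →
      ∀ ν : SignedMeasure (EuclideanSpace ℝ (Fin d)),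
        ν.totalVariation (Metric.ball 0 N) = 0 →
      ∀ x : EuclideanSpace ℝ (Fin d), ‖x‖ ≤ N₀ →
        shortVariation ρ (fun ε => Tnu K ν ε x)
          ≤ ENNReal.ofReal (C / (N - N₀) ^ n) * ν.totalVariation Set.univ := by
  refine ⟨2 * (|CK| + 1), by positivity, ?_⟩
  intro ρ hρ K hK N₀ N hN₀ hNN ν hν x hx
  set μp := ν.toJordanDecomposition.posPart with hμp
  set μn := ν.toJordanDecomposition.negPart with hμn
  have htv : ν.totalVariation = μp + μn := rfl
  have hNpos : (0:ℝ) < N - N₀ := by linarith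
  set B : ℝ := (|CK| + 1) / (N - N₀) ^ n with hB
  have hBpos : 0 < B := by positivity
  -- the two parts of the Jordan decomposition vanish on the ball
  have hball : μp (Metric.ball (0:EuclideanSpace ℝ (Fin d)) N) = 0 ∧
      μn (Metric.ball (0:EuclideanSpace ℝ (Fin d)) N) = 0 := by
    have h0 : μp (Metric.ball (0:EuclideanSpace ℝ (Fin d)) N)
        + μn (Metric.ball (0:EuclideanSpace ℝ (Fin d)) N) = 0 := by
      rw [← Measure.add_apply, ← htv]; exact hν
    exact add_eq_zero.mp h0
  -- a.e. bound for the kernel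
  have hae : ∀ μ0 : Measure (EuclideanSpace ℝ (Fin d)),
      μ0 (Metric.ball (0:EuclideanSpace ℝ (Fin d)) N) = 0 →
      ∀ᵐ y ∂μ0, |K (x - y)| ≤ B := by
    intro μ0 h0
    have hb : ∀ᵐ y ∂μ0, y ∉ Metric.ball (0:EuclideanSpace ℝ (Fin d)) N := by
      rw [ae_iff]
      simp only [not_not]
      exact h0
    filter_upwards [hb] with y hy
    have hyN : N ≤ ‖y‖ := by
      rw [Metric.mem_ball, dist_zero_right] at hy
      linarith [not_lt.mp hy]
    have h1 : N - N₀ ≤ ‖x - y‖ := by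
      have h2 : ‖y‖ - ‖x‖ ≤ ‖y - x‖ := norm_sub_norm_le y x
      rw [norm_sub_rev y x] at h2
      linarith
    have hne : x - y ≠ 0 := by
      intro h
      rw [h, norm_zero] at h1
      linarith
    calc |K (x - y)| ≤ CK / ‖x - y‖ ^ n := hK _ hne
      _ ≤ (|CK| + 1) / (N - N₀) ^ n := by
          apply div_le_div₀ (by positivity) (by linarith [le_abs_self CK]) (by positivity)
          exact pow_le_pow_left₀ hNpos.le h1 n
  have haeP : ∀ᵐ y ∂μp, |K (x - y)| ≤ B := hae μp hball.1
  have haeN : ∀ᵐ y ∂μn, |K (x - y)| ≤ B := hae μn hball.2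
  -- the target bound
  set SE : ℝ≥0∞ := ENNReal.ofReal (2 * (|CK| + 1) / (N - N₀) ^ n) * ν.totalVariation Set.univ
    with hSE
  have hSEtop : SE ≠ ⊤ := by
    apply ENNReal.mul_ne_top ENNReal.ofReal_ne_top
    rw [htv, Measure.add_apply]
    exact ENNReal.add_ne_top.mpr ⟨measure_ne_top _ _, measure_ne_top _ _⟩
  refine iSup_le fun ε => iSup_le fun hεa => iSup_le fun _ => ?_
  -- the ℓ¹ bound on the differences
  have hsum : ∑' m : ℤ, ENNReal.ofReal |Tnu K ν (ε m) x - Tnu K ν (ε (m+1)) x| ≤ SE := by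
    have hkeyP := key_sum μp (fun y => K (x - y)) hBpos.le haeP x ε hεa
    have hkeyN := key_sum μn (fun y => K (x - y)) hBpos.le haeN x ε hεa
    have hpt : ∀ m : ℤ, ENNReal.ofReal |Tnu K ν (ε m) x - Tnu K ν (ε (m+1)) x|
        ≤ ENNReal.ofReal |(∫ y in {y | ε m < dist x y}, K (x - y) ∂μp)
              - ∫ y in {y | ε (m+1) < dist x y}, K (x - y) ∂μp|
          + ENNReal.ofReal |(∫ y in {y | ε m < dist x y}, K (x - y) ∂μn)
              - ∫ y in {y | ε (m+1) < dist x y}, K (x - y) ∂μn| := by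
      intro m
      refine le_trans (ENNReal.ofReal_le_ofReal ?_) ENNReal.ofReal_add_le
      show |Tnu K ν (ε m) x - Tnu K ν (ε (m+1)) x| ≤ _
      rw [Tnu, Tnu]
      have heq : ∀ a b c e : ℝ, a - b - (c - e) = (a - c) - (b - e) := by intros; ring
      rw [heq]
      exact abs_sub _ _
    calc ∑' m : ℤ, ENNReal.ofReal |Tnu K ν (ε m) x - Tnu K ν (ε (m+1)) x|
        ≤ ∑' m : ℤ, (ENNReal.ofReal |(∫ y in {y | ε m < dist x y}, K (x - y) ∂μp)
              - ∫ y in {y | ε (m+1) < dist x y}, K (x - y) ∂μp|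
          + ENNReal.ofReal |(∫ y in {y | ε m < dist x y}, K (x - y) ∂μn)
              - ∫ y in {y | ε (m+1) < dist x y}, K (x - y) ∂μn|) :=
          ENNReal.tsum_le_tsum hpt
      _ = (∑' m : ℤ, ENNReal.ofReal |(∫ y in {y | ε m < dist x y}, K (x - y) ∂μp)
              - ∫ y in {y | ε (m+1) < dist x y}, K (x - y) ∂μp|)
          + ∑' m : ℤ, ENNReal.ofReal |(∫ y in {y | ε m < dist x y}, K (x - y) ∂μn)
              - ∫ y in {y | ε (m+1) < dist x y}, K (x - y) ∂μn| := ENNReal.tsum_add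
      _ ≤ 2 * (ENNReal.ofReal B * μp Set.univ) + 2 * (ENNReal.ofReal B * μn Set.univ) :=
          add_le_add hkeyP hkeyN
      _ = SE := by
          have h2B : (2:ℝ≥0∞) * ENNReal.ofReal B
              = ENNReal.ofReal (2 * (|CK| + 1) / (N - N₀) ^ n) := by
            rw [show (2:ℝ≥0∞) = ENNReal.ofReal 2 by simp,
              ← ENNReal.ofReal_mul (by norm_num : (0:ℝ) ≤ 2)]
            congr 1
            rw [hB]; ring
          rw [hSE, htv, Measure.add_apply, mul_add, ← mul_assoc, ← mul_assoc, h2B]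
  -- bound the double sum by the ρ-th power of SE
  have hmain : (∑' k : ℤ, ∑' m : ℤ,
      Set.indicator {m : ℤ | ε m ∈ Ik k ∧ ε (m + 1) ∈ Ik k}
        (fun m => ENNReal.ofReal |Tnu K ν (ε m) x - Tnu K ν (ε (m + 1)) x| ^ ρ) m)
      ≤ SE ^ ρ := by
    rw [ENNReal.tsum_comm]
    have hk : ∀ m : ℤ, (∑' k : ℤ,
        Set.indicator {m : ℤ | ε m ∈ Ik k ∧ ε (m + 1) ∈ Ik k}
          (fun m => ENNReal.ofReal |Tnu K ν (ε m) x - Tnu K ν (ε (m + 1)) x| ^ ρ) m)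
        ≤ ENNReal.ofReal |Tnu K ν (ε m) x - Tnu K ν (ε (m + 1)) x| ^ ρ := by
      intro m
      by_cases h : ∃ k : ℤ, ε m ∈ Ik k ∧ ε (m+1) ∈ Ik k
      · obtain ⟨k₀, hk₀⟩ := h
        rw [tsum_eq_single k₀ ?_]
        · exact le_of_eq (Set.indicator_of_mem
            (show m ∈ {m : ℤ | ε m ∈ Ik k₀ ∧ ε (m + 1) ∈ Ik k₀} from hk₀) _)
        · intro k hk
          apply Set.indicator_of_notMem
          intro hm
          exact hk (Ik_unique hm.1 hk₀.1)
      · push_neg at h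
        have hz : ∀ k : ℤ, Set.indicator {m : ℤ | ε m ∈ Ik k ∧ ε (m + 1) ∈ Ik k}
            (fun m => ENNReal.ofReal |Tnu K ν (ε m) x - Tnu K ν (ε (m + 1)) x| ^ ρ) m = 0 := by
          intro k
          apply Set.indicator_of_notMem
          intro hm
          exact h k hm.1 hm.2
        simp [hz]
    refine le_trans (ENNReal.tsum_le_tsum hk) ?_
    exact tsum_rpow_le hSEtop hsum hρ
  calc (∑' k : ℤ, ∑' m : ℤ,
      Set.indicator {m : ℤ | ε m ∈ Ik k ∧ ε (m + 1) ∈ Ik k}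
        (fun m => ENNReal.ofReal |Tnu K ν (ε m) x - Tnu K ν (ε (m + 1)) x| ^ ρ) m) ^ (1/ρ)
      ≤ (SE ^ ρ) ^ (1/ρ) :=
        ENNReal.rpow_le_rpow hmain (by positivity)
    _ = SE := by
        rw [← ENNReal.rpow_mul, mul_one_div_cancel (by linarith : ρ ≠ 0), ENNReal.rpow_one]


end
end
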